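/- arXiv:math/0206186 — 9 statements merged into one kernel-verified Lean document; each statement's English description precedes it below -/
import Mathlib

section
/- Let Q be in the class F of nonnegative, positively homogeneous, concave functions on ℝ_{≥0}^n, let P be its gauge transform, and suppose Q(q) = 1 and p lies in the superdifferential ∂Q(q). Then P(p) = 1 and q ∈ ∂P(p). -/
open Finset

/-- Blocking pair lemma: if `Q ∈ F`, `P` is its gauge transform, `Q q = 1`
and `p ∈ ∂Q(q)` (superdifferential), then `P p = 1` and `q ∈ ∂P(p)`. -/
theorem blocking_pair (n : ℕ)
    (Q P : (Fin n → ℝ) → ℝ)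
    (hQnonneg : ∀ x : Fin n → ℝ, (∀ i, 0 ≤ x i) → 0 ≤ Q x)
    (hQhom : ∀ (l : ℝ), 0 ≤ l → ∀ x : Fin n → ℝ, (∀ i, 0 ≤ x i) → Q (l • x) = l * Q x)
    (hQconc : ConcaveOn ℝ {x : Fin n → ℝ | ∀ i, 0 ≤ x i} Q)
    (hP : ∀ p : Fin n → ℝ, P p =
      sInf {r : ℝ | ∃ q' : Fin n → ℝ, (∀ i, 0 ≤ q' i) ∧ 0 < Q q' ∧
        r = (∑ i, q' i * p i) / Q q'})
    (q : Fin n → ℝ) (hq : ∀ i, 0 ≤ q i) (hQq : Q q = 1)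
    (p : Fin n → ℝ) (hpnn : ∀ i, 0 ≤ p i)
    (hp : ∀ x : Fin n → ℝ, (∀ i, 0 ≤ x i) →
      Q x - Q q ≤ ∑ i, p i * (x i - q i)) :
    P p = 1 ∧
    ∀ p' : Fin n → ℝ, (∀ i, 0 ≤ p' i) →
      P p' - P p ≤ ∑ i, q i * (p' i - p i) := by
  -- ∑ p i * q i = 1
  have h2q : ∀ i, 0 ≤ ((2:ℝ) • q) i := fun i => by
    simp only [Pi.smul_apply, smul_eq_mul]; linarith [hq i]
  have hQ2q : Q ((2:ℝ) • q) = 2 := by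
    rw [hQhom 2 (by norm_num) q hq, hQq]; ring
  have hge : (1:ℝ) ≤ ∑ i, p i * q i := by
    have := hp ((2:ℝ) • q) h2q
    rw [hQ2q, hQq] at this
    have : (1:ℝ) ≤ ∑ i, p i * (2 * q i - q i) := by
      simp only [Pi.smul_apply, smul_eq_mul] at this; linarith
    calc (1:ℝ) ≤ ∑ i, p i * (2 * q i - q i) := this
      _ = ∑ i, p i * q i := by
        apply Finset.sum_congr rfl; intro i _; ring
  have hQ0 : Q 0 = 0 := by
    have := hQhom 0 le_rfl q hq
    simpa using this
  have hle : ∑ i, p i * q i ≤ 1 := by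
    have := hp 0 (fun i => le_rfl)
    rw [hQ0, hQq] at this
    have h : (0:ℝ) - 1 ≤ ∑ i, -(p i * q i) := by
      simpa [Pi.zero_apply, mul_comm] using this
    rw [Finset.sum_neg_distrib] at h
    linarith
  have hpq : ∑ i, p i * q i = 1 := le_antisymm hle hge
  have hqp : ∑ i, q i * p i = 1 := by
    rw [← hpq]; exact Finset.sum_congr rfl fun i _ => mul_comm _ _
  -- key: for q' ≥ 0, Q q' ≤ ∑ q' i * p i
  have key : ∀ q' : Fin n → ℝ, (∀ i, 0 ≤ q' i) → Q q' ≤ ∑ i, q' i * p i := by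
    intro q' hq'
    have := hp q' hq'
    rw [hQq] at this
    have hsplit : ∑ i, p i * (q' i - q i) = (∑ i, q' i * p i) - ∑ i, p i * q i := by
      rw [← Finset.sum_sub_distrib]
      exact Finset.sum_congr rfl fun i _ => by ring
    rw [hsplit, hpq] at this
    linarith
  -- sets are bounded below by 0
  have bdd : ∀ p' : Fin n → ℝ, (∀ i, 0 ≤ p' i) →
      BddBelow {r : ℝ | ∃ q' : Fin n → ℝ, (∀ i, 0 ≤ q' i) ∧ 0 < Q q' ∧
        r = (∑ i, q' i * p' i) / Q q'} := by
    intro p' hp'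
    refine ⟨0, ?_⟩
    rintro r ⟨q', hq', hQq', rfl⟩
    apply div_nonneg _ hQq'.le
    exact Finset.sum_nonneg fun i _ => mul_nonneg (hq' i) (hp' i)
  have hmem : ∀ p' : Fin n → ℝ,
      (∑ i, q i * p' i) ∈ {r : ℝ | ∃ q' : Fin n → ℝ, (∀ i, 0 ≤ q' i) ∧ 0 < Q q' ∧
        r = (∑ i, q' i * p' i) / Q q'} := by
    intro p'
    exact ⟨q, hq, by rw [hQq]; norm_num, by rw [hQq, div_one]⟩
  have hPp : P p = 1 := by
    rw [hP p]
    apply le_antisymm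
    · have := csInf_le (bdd p hpnn) (hmem p)
      rwa [hqp] at this
    · apply le_csInf ⟨_, hmem p⟩
      rintro r ⟨q', hq', hQq', rfl⟩
      rw [le_div_iff₀ hQq', one_mul]
      exact key q' hq'
  refine ⟨hPp, ?_⟩
  intro p' hp'
  have hPle : P p' ≤ ∑ i, q i * p' i := by
    rw [hP p']
    exact csInf_le (bdd p' hp') (hmem p')
  have hsplit : ∑ i, q i * (p' i - p i) = (∑ i, q i * p' i) - ∑ i, q i * p i := by
    rw [← Finset.sum_sub_distrib]
    exact Finset.sum_congr rfl fun i _ => by ring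
  rw [hsplit, hqp, hPp]
  linarith
end

section
/- Given market statistics {(p^t, q^t)}_{t=1}^T with p^t, q^t ∈ ℝ_{>0}^n, if the linear system λ_t (p^t·q^t) ≤ λ_τ (p^τ·q^t), λ_t > 0 for all t, τ, is consistent, then the function Q(q) = min_{i=1..T} λ_i (p^i·q) rationalizes the statistics: for each t, q^t maximizes Q over {q ≥ 0 : p^t·q ≤ p^t·q^t}. -/
open Finset

/-- Afriat construction: if the linear system `λ_t (p^t·q^t) ≤ λ_τ (p^τ·q^t)`
with `λ_t > 0` is consistent, then `Q(x) = min_i λ_i (p^i·x)` rationalizes the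
market statistics: each `q^t` maximizes `Q` over the budget set
`{x ≥ 0 : p^t·x ≤ p^t·q^t}`. -/
theorem afriat_utility_rationalizes (n T : ℕ)
    (p q : Fin (T + 1) → Fin n → ℝ)
    (hp : ∀ t i, 0 < p t i) (hq : ∀ t i, 0 < q t i)
    (l : Fin (T + 1) → ℝ) (hl : ∀ t, 0 < l t)
    (hsys : ∀ t τ : Fin (T + 1),
      l t * (∑ i, p t i * q t i) ≤ l τ * (∑ i, p τ i * q t i))
    (Q : (Fin n → ℝ) → ℝ)
    (hQ : ∀ x : Fin n → ℝ,
      Q x = Finset.univ.inf' Finset.univ_nonempty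
        (fun i : Fin (T + 1) => l i * ∑ j, p i j * x j)) :
    ∀ t : Fin (T + 1), ∀ x : Fin n → ℝ, (∀ i, 0 ≤ x i) →
      (∑ i, p t i * x i) ≤ (∑ i, p t i * q t i) → Q x ≤ Q (q t) := by
  intro t x _ hbudget
  rw [hQ x, hQ (q t)]
  calc Finset.univ.inf' Finset.univ_nonempty
        (fun i : Fin (T + 1) => l i * ∑ j, p i j * x j)
      ≤ l t * ∑ j, p t j * x j :=
        Finset.inf'_le _ (Finset.mem_univ t)
    _ ≤ l t * ∑ j, p t j * q t j :=
        mul_le_mul_of_nonneg_left hbudget (hl t).le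
    _ ≤ _ := Finset.le_inf' _ _ (fun τ _ => hsys t τ)
end

section
/- If the market statistics {(p^t, q^t)}_{t=1}^T is rationalizable by some Q ∈ F with Q(q^t) > 0 for all t, then for any ordered tuple t(1),…,t(k) of indices, (p^{t(1)}·q^{t(2)})(p^{t(2)}·q^{t(3)})⋯(p^{t(k)}·q^{t(1)}) ≥ (p^{t(1)}·q^{t(1)})(p^{t(2)}·q^{t(2)})⋯(p^{t(k)}·q^{t(k)}). -/
open Finset

/-- Cyclic successor on `Fin k`. -/
def cyc {k : ℕ} (i : Fin k) : Fin k := ⟨(i.val + 1) % k, Nat.mod_lt _ i.pos⟩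

/-- If the market statistics is rationalizable by a nonnegative, positively
homogeneous, concave utility `Q` with `Q (q^t) > 0`, then the strong
homogeneous axiom of revealed preference holds: for any ordered tuple of
indices, the cyclic product `∏ (p^{t(i)}·q^{t(i+1)})` dominates the diagonal
product `∏ (p^{t(i)}·q^{t(i)})`. -/
theorem rationalizable_implies_homogeneous_axiom (n T : ℕ)
    (p q : Fin (T + 1) → Fin n → ℝ)
    (hp : ∀ t i, 0 < p t i) (hq : ∀ t i, 0 < q t i)
    (Q : (Fin n → ℝ) → ℝ)
    (hQnonneg : ∀ x : Fin n → ℝ, (∀ i, 0 ≤ x i) → 0 ≤ Q x)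
    (hQhom : ∀ (l : ℝ), 0 ≤ l → ∀ x : Fin n → ℝ, (∀ i, 0 ≤ x i) → Q (l • x) = l * Q x)
    (hQconc : ConcaveOn ℝ {x : Fin n → ℝ | ∀ i, 0 ≤ x i} Q)
    (hQpos : ∀ t, 0 < Q (q t))
    (hrat : ∀ t : Fin (T + 1), ∀ x : Fin n → ℝ, (∀ i, 0 ≤ x i) →
      (∑ i, p t i * x i) ≤ (∑ i, p t i * q t i) → Q x ≤ Q (q t)) :
    ∀ (k : ℕ) (t : Fin k → Fin (T + 1)),
      (∏ i : Fin k, ∑ j, p (t i) j * q (t (cyc i)) j) ≥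
      (∏ i : Fin k, ∑ j, p (t i) j * q (t i) j) := by
  intro k t
  rcases k with _ | m
  · simp
  rcases n with _ | n'
  · -- degenerate case: all sums are empty
    simp
  -- notation
  set a : Fin (m + 1) → ℝ := fun i => ∑ j, p (t i) j * q (t i) j with ha_def
  set b : Fin (m + 1) → ℝ := fun i => ∑ j, p (t i) j * q (t (cyc i)) j with hb_def
  set c : Fin (m + 1) → ℝ := fun i => Q (q (t i)) with hc_def
  have hapos : ∀ i, 0 < a i := fun i =>
    Finset.sum_pos (fun j _ => mul_pos (hp _ j) (hq _ j)) Finset.univ_nonempty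
  have hbpos : ∀ i, 0 < b i := fun i =>
    Finset.sum_pos (fun j _ => mul_pos (hp _ j) (hq _ j)) Finset.univ_nonempty
  have hcpos : ∀ i, 0 < c i := fun i => hQpos _
  -- key inequality
  have key : ∀ i, a i * (c (cyc i) / c i) ≤ b i := by
    intro i
    set l : ℝ := a i / b i with hl_def
    have hl : 0 ≤ l := le_of_lt (div_pos (hapos i) (hbpos i))
    have hxnn : ∀ j, 0 ≤ (l • q (t (cyc i))) j := fun j =>
      mul_nonneg hl (le_of_lt (hq _ j))
    have hbudget : (∑ j, p (t i) j * (l • q (t (cyc i))) j) ≤ ∑ j, p (t i) j * q (t i) j := by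
      have : (∑ j, p (t i) j * (l • q (t (cyc i))) j) = l * b i := by
        rw [Finset.mul_sum]
        apply Finset.sum_congr rfl
        intro j _
        simp [Pi.smul_apply, smul_eq_mul]
        ring
      rw [this, hl_def, div_mul_cancel₀ _ (ne_of_gt (hbpos i))]
    have hQle := hrat (t i) (l • q (t (cyc i))) hxnn hbudget
    rw [hQhom l hl _ (fun j => le_of_lt (hq _ j))] at hQle
    -- hQle : l * Q (q (t (cyc i))) ≤ Q (q (t i)), i.e. l * c (cyc i) ≤ c i
    have hQle' : (a i / b i) * c (cyc i) ≤ c i := hQle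
    have h1 : a i * c (cyc i) ≤ c i * b i := by
      have h2 := mul_le_mul_of_nonneg_right hQle' (le_of_lt (hbpos i))
      have h3 : a i / b i * c (cyc i) * b i = a i * c (cyc i) := by
        rw [div_mul_eq_mul_div, div_mul_cancel₀ _ (ne_of_gt (hbpos i))]
      rw [h3] at h2
      exact h2
    calc a i * (c (cyc i) / c i) = a i * c (cyc i) / c i := by ring
      _ ≤ c i * b i / c i := div_le_div_of_nonneg_right h1 (hcpos i).le
      _ = b i := by
          rw [mul_comm, mul_div_assoc, div_self (ne_of_gt (hcpos i)), mul_one]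
  -- cyclic product of c equals product of c
  have hcyceq : ∀ i : Fin (m + 1), cyc i = i + 1 := by
    intro i
    apply Fin.ext
    simp only [cyc, Fin.add_def, Fin.val_one', Nat.add_mod_mod]
  have hprodc : (∏ i, c (cyc i)) = ∏ i, c i := by
    calc (∏ i, c (cyc i)) = ∏ i, c (i + 1) := by
          apply Finset.prod_congr rfl; intro i _; rw [hcyceq]
      _ = ∏ i, c ((Equiv.addRight (1 : Fin (m + 1))) i) := rfl
      _ = ∏ i, c i := Equiv.prod_comp _ _
  -- conclude
  have step : (∏ i, a i * (c (cyc i) / c i)) ≤ ∏ i, b i := by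
    apply Finset.prod_le_prod
    · intro i _
      exact mul_nonneg (le_of_lt (hapos i))
        (div_nonneg (le_of_lt (hcpos _)) (le_of_lt (hcpos i)))
    · intro i _; exact key i
  have heq : (∏ i, a i * (c (cyc i) / c i)) = ∏ i, a i := by
    rw [Finset.prod_mul_distrib, Finset.prod_div_distrib, hprodc,
      div_self (ne_of_gt (Finset.prod_pos (fun i _ => hcpos i))), mul_one]
  calc (∏ i, a i) = ∏ i, a i * (c (cyc i) / c i) := heq.symm
    _ ≤ ∏ i, b i := step
end

section
/- For positive data a_{tτ} = p^τ·q^t > 0, t,τ = 1,…,T, the system λ_t a_{tt} ≤ λ_τ a_{tτ} (λ_t > 0 for all t) is consistent if and only if for every cyclic sequence t(1),…,t(k) one has a_{t(2)t(1)} a_{t(3)t(2)} ⋯ a_{t(1)t(k)} ≥ a_{t(1)t(1)} ⋯ a_{t(k)t(k)}. -/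
open Finset

lemma cyc_bijective {k : ℕ} : Function.Bijective (cyc (k := k)) := by
  rw [← Finite.injective_iff_bijective]
  intro i j h
  have hk : 0 < k := i.pos
  have hi := i.isLt
  have hj := j.isLt
  simp only [cyc, Fin.mk.injEq] at h
  apply Fin.ext
  by_cases h1 : i.val + 1 = k
  · by_cases h2 : j.val + 1 = k
    · omega
    · rw [h1, Nat.mod_self, Nat.mod_eq_of_lt (by omega)] at h; omega
  · by_cases h2 : j.val + 1 = k
    · rw [h2, Nat.mod_self, Nat.mod_eq_of_lt (by omega)] at h; omega
    · rw [Nat.mod_eq_of_lt (by omega), Nat.mod_eq_of_lt (by omega)] at h; omega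

lemma prod_cyc {k : ℕ} (F : Fin k → ℝ) : ∏ i, F (cyc i) = ∏ i, F i :=
  Fintype.prod_bijective cyc cyc_bijective _ F (fun _ => rfl)

lemma sum_cyc {k : ℕ} (F : Fin k → ℝ) : ∑ i, F (cyc i) = ∑ i, F i :=
  Fintype.sum_bijective cyc cyc_bijective _ F (fun _ => rfl)

section Walks

variable {T : ℕ}

/-- Cost of the walk starting at `t` and passing through the vertices of `L`. -/
def wcost (c : Fin T → Fin T → ℝ) : Fin T → List (Fin T) → ℝ
  | _, [] => 0
  | t, u :: L => c t u + wcost c u L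

/-- `n`-th vertex of the walk starting at `t` through `L` (clamped at the end). -/
def wvert : Fin T → List (Fin T) → ℕ → Fin T
  | t, _, 0 => t
  | t, [], _ + 1 => t
  | _, u :: L, n + 1 => wvert u L n

@[simp] lemma wcost_nil (c : Fin T → Fin T → ℝ) (t : Fin T) : wcost c t [] = 0 := rfl
@[simp] lemma wcost_cons (c : Fin T → Fin T → ℝ) (t u : Fin T) (L : List (Fin T)) :
    wcost c t (u :: L) = c t u + wcost c u L := rfl
@[simp] lemma wvert_zero (t : Fin T) (L : List (Fin T)) : wvert t L 0 = t := by
  cases L <;> rfl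
@[simp] lemma wvert_nil (t : Fin T) (n : ℕ) : wvert t [] n = t := by cases n <;> rfl
@[simp] lemma wvert_cons (t u : Fin T) (L : List (Fin T)) (n : ℕ) :
    wvert t (u :: L) (n + 1) = wvert u L n := rfl

lemma wvert_append : ∀ (A B : List (Fin T)) (t : Fin T) (n : ℕ), n ≤ A.length →
    wvert t (A ++ B) n = wvert t A n := by
  intro A
  induction A with
  | nil =>
    intro B t n hn
    simp only [List.length_nil, Nat.le_zero] at hn
    subst hn; simp
  | cons a A ih =>
    intro B t n hn
    cases n with
    | zero => simp
    | succ n => simpa using ih B a n (by simpa using hn)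

lemma wvert_append_add : ∀ (A B : List (Fin T)) (t : Fin T) (n : ℕ),
    wvert t (A ++ B) (A.length + n) = wvert (wvert t A A.length) B n := by
  intro A
  induction A with
  | nil => intro B t n; simp
  | cons a A ih =>
    intro B t n
    have h : (a :: A).length + n = (A.length + n) + 1 := by simp; omega
    rw [h]
    simpa using ih B a n

lemma wcost_append (c : Fin T → Fin T → ℝ) : ∀ (A B : List (Fin T)) (t : Fin T),
    wcost c t (A ++ B) = wcost c t A + wcost c (wvert t A A.length) B := by
  intro A
  induction A with
  | nil => intro B t; simp
  | cons a A ih =>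
    intro B t
    simp only [List.cons_append, wcost_cons, List.length_cons, wvert_cons]
    rw [ih]
    ring

lemma wcost_eq_sum (c : Fin T → Fin T → ℝ) : ∀ (L : List (Fin T)) (t : Fin T),
    wcost c t L = ∑ j ∈ Finset.range L.length, c (wvert t L j) (wvert t L (j + 1)) := by
  intro L
  induction L with
  | nil => intro t; simp
  | cons u L ih =>
    intro t
    rw [List.length_cons, Finset.sum_range_succ']
    simp only [wvert_cons, wvert_zero, wcost_cons]
    rw [← ih u]
    ring

/-- Bellman–Ford iterates. -/
def bf (c : Fin T → Fin T → ℝ) : ℕ → Fin T → ℝ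
  | 0, _ => 0
  | m + 1, t => min (bf c m t)
      (Finset.univ.inf' ⟨t, Finset.mem_univ t⟩ fun τ => c t τ + bf c m τ)

lemma bf_succ_le (c : Fin T → Fin T → ℝ) (m : ℕ) (t τ : Fin T) :
    bf c (m + 1) t ≤ c t τ + bf c m τ :=
  le_trans (min_le_right _ _) (Finset.inf'_le _ (Finset.mem_univ τ))

lemma bf_le_wcost (c : Fin T → Fin T → ℝ) : ∀ (m : ℕ) (L : List (Fin T)) (t : Fin T),
    L.length ≤ m → bf c m t ≤ wcost c t L := by
  intro m
  induction m with
  | zero =>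
    intro L t hL
    have : L = [] := List.length_eq_zero_iff.mp (Nat.le_zero.mp hL)
    subst this; simp [bf]
  | succ m ih =>
    intro L t hL
    cases L with
    | nil =>
      calc bf c (m + 1) t ≤ bf c m t := min_le_left _ _
        _ ≤ wcost c t [] := ih [] t (by simp)
    | cons u L' =>
      calc bf c (m + 1) t ≤ c t u + bf c m u := bf_succ_le c m t u
        _ ≤ c t u + wcost c u L' := by
            have := ih L' u (by simpa using hL)
            linarith
        _ = wcost c t (u :: L') := by simp

lemma bf_exists_walk (c : Fin T → Fin T → ℝ) : ∀ (m : ℕ) (t : Fin T),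
    ∃ L : List (Fin T), L.length ≤ m ∧ bf c m t = wcost c t L := by
  intro m
  induction m with
  | zero => intro t; exact ⟨[], by simp, by simp [bf]⟩
  | succ m ih =>
    intro t
    obtain ⟨τ, -, hτ⟩ := Finset.exists_mem_eq_inf' (⟨t, Finset.mem_univ t⟩ :
      (Finset.univ : Finset (Fin T)).Nonempty) (fun τ => c t τ + bf c m τ)
    rcases le_total (bf c m t) (c t τ + bf c m τ) with h | h
    · obtain ⟨L, hL, hcost⟩ := ih t
      refine ⟨L, le_trans hL (by omega), ?_⟩
      rw [show bf c (m + 1) t = bf c m t from by rw [bf, hτ]; exact min_eq_left h]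
      exact hcost
    · obtain ⟨L, hL, hcost⟩ := ih τ
      refine ⟨τ :: L, by simp; omega, ?_⟩
      rw [show bf c (m + 1) t = c t τ + bf c m τ from by rw [bf, hτ]; exact min_eq_right h]
      simp [hcost]

lemma cycle_nonneg (c : Fin T → Fin T → ℝ)
    (H : ∀ (k : ℕ) (s : Fin k → Fin T), 0 ≤ ∑ i, c (s (cyc i)) (s i)) :
    ∀ (t : Fin T) (L : List (Fin T)), wvert t L L.length = t → 0 ≤ wcost c t L := by
  intro t L hL
  by_cases hk : L.length = 0
  · have : L = [] := List.length_eq_zero_iff.mp hk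
    subst this; simp
  · set k := L.length with hkdef
    have hk0 : 0 < k := Nat.pos_of_ne_zero hk
    have key := H k (fun i => wvert t L ((k - i.val) % k))
    have e1 : ∑ i : Fin k, c (wvert t L ((k - (cyc i).val) % k)) (wvert t L ((k - i.val) % k))
        = ∑ i : Fin k, c (wvert t L (k - 1 - i.val)) (wvert t L ((k - i.val) % k)) := by
      refine Finset.sum_congr rfl fun i _ => ?_
      have hi := i.isLt
      have hnat : (k - ((i.val + 1) % k)) % k = k - 1 - i.val := by
        by_cases h1 : i.val + 1 = k
        · rw [h1, Nat.mod_self, Nat.sub_zero, Nat.mod_self]; omega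
        · have h2 : (i.val + 1) % k = i.val + 1 := Nat.mod_eq_of_lt (by omega)
          rw [h2, Nat.mod_eq_of_lt (by omega)]; omega
      simp only [cyc]
      rw [hnat]
    have e2 : ∑ i : Fin k, c (wvert t L (k - 1 - i.val)) (wvert t L ((k - i.val) % k))
        = ∑ j ∈ Finset.range k, c (wvert t L (k - 1 - j)) (wvert t L ((k - j) % k)) :=
      Fin.sum_univ_eq_sum_range (fun j => c (wvert t L (k - 1 - j)) (wvert t L ((k - j) % k))) k
    have e3 : ∑ j ∈ Finset.range k, c (wvert t L (k - 1 - j)) (wvert t L ((k - j) % k))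
        = ∑ j ∈ Finset.range k, c (wvert t L j) (wvert t L ((j + 1) % k)) := by
      rw [← Finset.sum_range_reflect (fun j => c (wvert t L j) (wvert t L ((j + 1) % k))) k]
      refine Finset.sum_congr rfl fun j hj => ?_
      have hjk : j < k := Finset.mem_range.mp hj
      have hnat : k - 1 - j + 1 = k - j := by omega
      rw [hnat]
    have e4 : ∑ j ∈ Finset.range k, c (wvert t L j) (wvert t L ((j + 1) % k))
        = ∑ j ∈ Finset.range k, c (wvert t L j) (wvert t L (j + 1)) := by
      refine Finset.sum_congr rfl fun j hj => ?_
      have hjk : j < k := Finset.mem_range.mp hj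
      by_cases h1 : j + 1 = k
      · have hz : (j + 1) % k = 0 := by rw [h1]; exact Nat.mod_self k
        have hend : wvert t L (j + 1) = t := by rw [h1]; exact hL
        rw [hz, wvert_zero, hend]
      · rw [Nat.mod_eq_of_lt (by omega)]
    rw [e1, e2, e3, e4] at key
    rw [wcost_eq_sum]
    exact key

lemma bf_le_wcost_all (c : Fin T → Fin T → ℝ)
    (H : ∀ (k : ℕ) (s : Fin k → Fin T), 0 ≤ ∑ i, c (s (cyc i)) (s i)) :
    ∀ (n : ℕ) (L : List (Fin T)) (t : Fin T), L.length ≤ n → bf c T t ≤ wcost c t L := by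
  intro n
  induction n with
  | zero =>
    intro L t hL
    exact bf_le_wcost c T L t (le_trans hL (Nat.zero_le T))
  | succ n ih =>
    intro L t hlen
    by_cases hL : L.length ≤ T
    · exact bf_le_wcost c T L t hL
    · push_neg at hL
      obtain ⟨p, q, hpq, heq⟩ : ∃ p q : Fin (T + 1), p.val < q.val ∧
          wvert t L p.val = wvert t L q.val := by
        obtain ⟨x, y, hxy, hxy'⟩ := Fintype.exists_ne_map_eq_of_card_lt
          (fun i : Fin (T + 1) => wvert t L i.val) (by simp)
        rcases lt_or_gt_of_ne (fun h => hxy (by exact_mod_cast Fin.ext h)) with h | h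
        · exact ⟨x, y, h, hxy'⟩
        · exact ⟨y, x, h, hxy'.symm⟩
      have hq : q.val ≤ T := Nat.lt_succ_iff.mp q.isLt
      set A := L.take p.val with hAdef
      set B := (L.drop p.val).take (q.val - p.val) with hBdef
      set C := L.drop q.val with hCdef
      have hAlen : A.length = p.val := by
        rw [hAdef, List.length_take]; omega
      have hBlen : B.length = q.val - p.val := by
        rw [hBdef, List.length_take, List.length_drop]; omega
      have hBC : B ++ C = L.drop p.val := by
        have h1 : (L.drop p.val).drop (q.val - p.val) = L.drop q.val := by
          rw [List.drop_drop]; congr 1; omega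
        rw [hBdef, hCdef, ← h1]
        exact List.take_append_drop _ _
      have hLsplit : A ++ (B ++ C) = L := by
        rw [hBC, hAdef]; exact List.take_append_drop _ _
      have hm : wvert t A A.length = wvert t L p.val := by
        conv_rhs => rw [← hLsplit]
        rw [wvert_append A (B ++ C) t p.val (le_of_eq hAlen.symm), hAlen]
      set m := wvert t L p.val with hmdef
      have hcycB : wvert m B B.length = m := by
        have h2 : wvert t L q.val = wvert (wvert t A A.length) (B ++ C) (q.val - p.val) := by
          conv_lhs => rw [← hLsplit, show q.val = A.length + (q.val - p.val) from by omega]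
          exact wvert_append_add A (B ++ C) t (q.val - p.val)
        rw [hm, ← hBlen, wvert_append B C m B.length le_rfl] at h2
        rw [← h2, ← heq]
      have hcost : wcost c t L = wcost c t A + wcost c m B + wcost c m C := by
        conv_lhs => rw [← hLsplit]
        rw [wcost_append, hm, wcost_append, hcycB]
        ring
      have hcost2 : wcost c t (A ++ C) = wcost c t A + wcost c m C := by
        rw [wcost_append, hm]
      have hBpos : 0 ≤ wcost c m B := cycle_nonneg c H m B hcycB
      have hlen' : (A ++ C).length ≤ n := by
        rw [List.length_append, hAlen, hCdef, List.length_drop]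
        omega
      calc bf c T t ≤ wcost c t (A ++ C) := ih (A ++ C) t hlen'
        _ ≤ wcost c t L := by rw [hcost, hcost2]; linarith

end Walks

/-- Combinatorial core of the Afriat–Varian theorem: for positive data
`a t τ` (`a t τ = p^τ · q^t`), the system `λ_t a_{tt} ≤ λ_τ a_{tτ}` with all
`λ_t > 0` is consistent iff every cyclic product
`a_{t(2)t(1)} a_{t(3)t(2)} ⋯ a_{t(1)t(k)}` dominates the corresponding
diagonal product `a_{t(1)t(1)} ⋯ a_{t(k)t(k)}`. -/
theorem afriat_cycle_condition (T : ℕ) (a : Fin T → Fin T → ℝ)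
    (ha : ∀ t τ, 0 < a t τ) :
    (∃ l : Fin T → ℝ, (∀ t, 0 < l t) ∧
        ∀ t τ, l t * a t t ≤ l τ * a t τ) ↔
    (∀ (k : ℕ) (t : Fin k → Fin T),
      (∏ i : Fin k, a (t (cyc i)) (t i)) ≥ (∏ i : Fin k, a (t i) (t i))) := by
  constructor
  · rintro ⟨l, hl, hle⟩ k t
    have h1 : ∏ i, (l (t (cyc i)) * a (t (cyc i)) (t (cyc i)))
        ≤ ∏ i, (l (t i) * a (t (cyc i)) (t i)) :=
      Finset.prod_le_prod (fun i _ => mul_nonneg (hl _).le (ha _ _).le) (fun i _ => hle (t (cyc i)) (t i))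
    rw [Finset.prod_mul_distrib, Finset.prod_mul_distrib,
      prod_cyc (fun i => l (t i)), prod_cyc (fun i => a (t i) (t i))] at h1
    have hpos : 0 < ∏ i, l (t i) := Finset.prod_pos fun i _ => hl (t i)
    exact le_of_mul_le_mul_left h1 hpos
  · intro H
    set c : Fin T → Fin T → ℝ := fun t τ => Real.log (a t τ) - Real.log (a t t) with hc
    have H' : ∀ (k : ℕ) (s : Fin k → Fin T), 0 ≤ ∑ i, c (s (cyc i)) (s i) := by
      intro k s
      have h1 := H k s
      have hp1 : (0:ℝ) < ∏ i, a (s i) (s i) := Finset.prod_pos fun i _ => ha _ _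
      have hlog : Real.log (∏ i, a (s i) (s i)) ≤ Real.log (∏ i, a (s (cyc i)) (s i)) :=
        Real.log_le_log hp1 h1
      rw [Real.log_prod (fun i _ => (ha _ _).ne'),
        Real.log_prod (fun i _ => (ha _ _).ne')] at hlog
      have hre : ∑ i : Fin k, Real.log (a (s i) (s i))
          = ∑ i : Fin k, Real.log (a (s (cyc i)) (s (cyc i))) :=
        (sum_cyc fun i => Real.log (a (s i) (s i))).symm
      rw [hre] at hlog
      simp only [hc]
      rw [Finset.sum_sub_distrib]
      linarith
    refine ⟨fun t => Real.exp (bf c T t), fun t => Real.exp_pos _, fun t τ => ?_⟩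
    have hkey : bf c T t ≤ c t τ + bf c T τ := by
      obtain ⟨L, hL, hcost⟩ := bf_exists_walk c (T + 1) t
      calc bf c T t ≤ wcost c t L := bf_le_wcost_all c H' L.length L t le_rfl
        _ = bf c (T + 1) t := hcost.symm
        _ ≤ c t τ + bf c T τ := bf_succ_le c T t τ
    have h2 : bf c T t + Real.log (a t t) ≤ bf c T τ + Real.log (a t τ) := by
      simp only [hc] at hkey; linarith
    calc Real.exp (bf c T t) * a t t
        = Real.exp (bf c T t + Real.log (a t t)) := by
          rw [Real.exp_add, Real.exp_log (ha t t)]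
      _ ≤ Real.exp (bf c T τ + Real.log (a t τ)) := Real.exp_le_exp.mpr h2
      _ = Real.exp (bf c T τ) * a t τ := by
          rw [Real.exp_add, Real.exp_log (ha t τ)]
end

section
/- For positive data a_{tτ} = p^τ·q^t > 0, the strict system λ_t a_{tt} < λ_τ a_{tτ} for all t ≠ τ (λ_t > 0) is consistent if and only if for every cyclic sequence t(1),…,t(k) with k ≥ 2 of distinct indices one has a_{t(2)t(1)} a_{t(3)t(2)} ⋯ a_{t(1)t(k)} > a_{t(1)t(1)} ⋯ a_{t(k)t(k)}. -/
open Finset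

section AfriatAux
variable {V : Type*}

/-- weight of a walk given as a list of vertices: edge u→v contributes `w v u`. -/
def pw (w : V → V → ℝ) : List V → ℝ
  | [] => 0
  | [_] => 0
  | (u :: v :: rest) => w v u + pw w (v :: rest)

lemma pw_eq_sum (w : V → V → ℝ) (d : V) (l : List V) :
    pw w l = ∑ i ∈ Finset.range (l.length - 1), w (l.getD (i+1) d) (l.getD i d) := by
  induction l with
  | nil => simp [pw]
  | cons a l ih =>
    cases l with
    | nil => simp [pw]
    | cons b t =>
      rw [pw, ih]
      simp only [List.length_cons, Nat.add_sub_cancel]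
      rw [Finset.sum_range_succ']
      simp [List.getD_cons_succ, List.getD_cons_zero]
      ring


lemma pw_splice (w : V → V → ℝ) (u : V) (B : List V) :
    ∀ A : List V, pw w (A ++ u :: B) = pw w (A ++ [u]) + pw w (u :: B) := by
  intro A
  induction A with
  | nil => simp [pw]
  | cons a A ih =>
    cases A with
    | nil => cases B with
      | nil => simp [pw]
      | cons b B' => simp [pw]
    | cons a' A' =>
      have h1 : (a :: a' :: A') ++ u :: B = a :: a' :: (A' ++ u :: B) := by simp
      have h2 : (a :: a' :: A') ++ [u] = a :: a' :: (A' ++ [u]) := by simp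
      rw [h1, h2, pw, pw]
      have := ih
      rw [show (a' :: A') ++ u :: B = a' :: (A' ++ u :: B) from rfl] at this
      rw [this]
      ring_nf
      rw [show a' :: (A' ++ [u]) = (a' :: A') ++ [u] from rfl]
      ring

lemma exists_dup_decomp : ∀ (l : List V), ¬ l.Nodup →
    ∃ (x : List V) (u : V) (y : List V) (z : List V), l = x ++ u :: y ++ u :: z := by
  intro l
  induction l with
  | nil => intro h; exact absurd List.nodup_nil h
  | cons a t ih =>
    intro h
    rw [List.nodup_cons] at h
    push_neg at h
    by_cases ha : a ∈ t
    · obtain ⟨y, z, rfl⟩ := List.append_of_mem ha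
      exact ⟨[], a, y, z, by simp⟩
    · obtain ⟨x, u, y, z, rfl⟩ := ih (h ha)
      exact ⟨a :: x, u, y, z, by simp⟩


/-- every closed walk (consecutive vertices distinct) has positive weight -/
def CW (w : V → V → ℝ) : Prop :=
  ∀ (v : V) (c : List V), c ≠ [] → List.Chain' Ne (v :: c ++ [v]) → 0 < pw w (v :: c ++ [v])

lemma sc_to_cw (w : V → V → ℝ)
    (hsc : ∀ (v : V) (c : List V), c ≠ [] → (v :: c).Nodup → 0 < pw w (v :: c ++ [v])) :
    CW w := by
  have key : ∀ (N : ℕ) (v : V) (c : List V), c.length ≤ N → c ≠ [] →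
      List.Chain' Ne (v :: c ++ [v]) → 0 < pw w (v :: c ++ [v]) := by
    intro N
    induction N with
    | zero =>
      intro v c hle hc _
      cases c with
      | nil => exact absurd rfl hc
      | cons a t => simp at hle
    | succ N ih =>
      intro v c hle hc hch
      by_cases hnd : (v :: c).Nodup
      · exact hsc v c hc hnd
      · obtain ⟨x, u, y, z, hdec⟩ := exists_dup_decomp _ hnd
        have hclen : c.length = x.length + y.length + z.length + 1 := by
          have := congrArg List.length hdec
          simp at this; omega
        have hW : v :: c ++ [v] = x ++ u :: (y ++ u :: (z ++ [v])) := by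
          have h1 : v :: c ++ [v] = (v :: c) ++ [v] := rfl
          rw [h1, hdec]; simp
        have hchW : List.Chain' Ne (x ++ u :: (y ++ u :: (z ++ [v]))) := hW ▸ hch
        -- the inner cycle u :: y ++ [u]
        have hcyc_infix : (u :: y ++ [u]) <:+: (x ++ u :: (y ++ u :: (z ++ [v]))) :=
          ⟨x, z ++ [v], by simp⟩
        have hchcyc : List.Chain' Ne (u :: y ++ [u]) := hchW.infix hcyc_infix
        have hy : y ≠ [] := by
          intro h; subst h
          exact (List.isChain_cons_cons.1 hchcyc).1 rfl
        have hcycpos : 0 < pw w (u :: y ++ [u]) := ih u y (by omega) hy hchcyc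
        -- weight splits
        have e1 : pw w (x ++ u :: (y ++ u :: (z ++ [v]))) =
            pw w (x ++ [u]) + pw w (u :: (y ++ u :: (z ++ [v]))) := pw_splice w u _ x
        have e2 : pw w (u :: (y ++ u :: (z ++ [v]))) =
            pw w (u :: y ++ [u]) + pw w (u :: (z ++ [v])) := by
          have h := pw_splice w u (z ++ [v]) (u :: y)
          simpa using h
        rw [hW, e1, e2]
        -- now need 0 < pw w (x ++ [u]) + (pw w (u :: y ++ [u]) + pw w (u :: (z ++ [v])))
        have hch_zv : List.Chain' Ne (u :: (z ++ [v])) :=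
          hchW.infix ⟨x ++ u :: y, [], by simp⟩
        cases x with
        | nil =>
          have hv : v = u := by
            have h := hdec; simp at h; exact h.1
          subst hv
          have hz : z ≠ [] := by
            rintro rfl
            exact (List.isChain_cons_cons.1 hch_zv).1 rfl
          have hWpos : 0 < pw w (v :: z ++ [v]) := ih v z (by omega) hz hch_zv
          have h0 : pw w (([] : List V) ++ [v]) = 0 := by simp [pw]
          simp only [List.cons_append] at hWpos hcycpos ⊢
          linarith
        | cons a x' =>
          have hv : v = a := by
            have h := hdec; simp at h; exact h.1
          subst hv
          simp only [List.length_cons] at hclen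
          have hch2 : List.Chain' Ne ((v :: x') ++ (u :: (y ++ u :: (z ++ [v])))) := by
            simpa using hchW
          obtain ⟨hx, hrest, hlink⟩ := List.isChain_append.1 hch2
          have hchW' : List.Chain' Ne ((v :: x') ++ (u :: (z ++ [v]))) := by
            refine List.isChain_append.2 ⟨hx, hch_zv, ?_⟩
            intro p hp q hq
            exact hlink p hp q (by simpa using hq)
          have hW'form : v :: (x' ++ u :: z) ++ [v] = (v :: x') ++ (u :: (z ++ [v])) := by simp
          have hW'pos : 0 < pw w (v :: (x' ++ u :: z) ++ [v]) := by
            refine ih v (x' ++ u :: z) (by simp only [List.length_append, List.length_cons]; omega)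
              (by simp) ?_
            rw [hW'form]; exact hchW'
          have e3 : pw w (v :: (x' ++ u :: z) ++ [v]) =
              pw w ((v :: x') ++ [u]) + pw w (u :: (z ++ [v])) := by
            rw [hW'form]
            exact pw_splice w u (z ++ [v]) (v :: x')
          rw [e3] at hW'pos
          simp only [List.cons_append] at hW'pos hcycpos ⊢
          linarith
  intro v c hc hch
  exact key c.length v c le_rfl hc hch


/-- expansion of a walk in the reduced graph to a walk in the original graph -/
noncomputable def expand (n : ℕ) (w : Fin (n+1) → Fin (n+1) → ℝ) : List (Fin n) → List (Fin (n+1))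
  | [] => []
  | [u] => [u.castSucc]
  | (u :: v :: rest) =>
    if w v.castSucc u.castSucc ≤ w v.castSucc (Fin.last n) + w (Fin.last n) u.castSucc
    then u.castSucc :: expand n w (v :: rest)
    else u.castSucc :: Fin.last n :: expand n w (v :: rest)

lemma expand_cons (n w) (v : Fin n) (rest : List (Fin n)) :
    ∃ E, expand n w (v :: rest) = v.castSucc :: E := by
  cases rest with
  | nil => exact ⟨[], rfl⟩
  | cons b t =>
    simp only [expand]
    split
    · exact ⟨_, rfl⟩
    · exact ⟨_, rfl⟩

def wred (n : ℕ) (w : Fin (n+1) → Fin (n+1) → ℝ) (σ τ : Fin n) : ℝ :=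
  min (w σ.castSucc τ.castSucc) (w σ.castSucc (Fin.last n) + w (Fin.last n) τ.castSucc)

lemma pw_expand (n w) : ∀ l : List (Fin n), pw w (expand n w l) = pw (wred n w) l := by
  intro l
  induction l with
  | nil => simp [expand, pw]
  | cons u l ih =>
    cases l with
    | nil => simp [expand, pw]
    | cons v rest =>
      obtain ⟨E, hE⟩ := expand_cons n w v rest
      simp only [expand]
      split
      case isTrue h =>
        rw [hE, pw, ← hE, ih, pw, wred, min_eq_left h]
      case isFalse h =>
        rw [hE, pw, pw, ← hE, ih, pw, wred,
          min_eq_right (le_of_lt (lt_of_not_ge h))]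
        ring

lemma expand_chain (n w) : ∀ l : List (Fin n), List.Chain' Ne l →
    List.Chain' Ne (expand n w l) := by
  intro l
  induction l with
  | nil => intro _; simp [expand]; exact List.isChain_nil
  | cons u l ih =>
    cases l with
    | nil => intro _; simp [expand]; exact List.isChain_singleton _
    | cons v rest =>
      intro hch
      replace hch := List.isChain_cons_cons.1 hch
      obtain ⟨huv, hch⟩ := hch
      obtain ⟨E, hE⟩ := expand_cons n w v rest
      have hih := ih hch
      simp only [expand]
      split
      · rw [hE] at hih ⊢
        exact List.isChain_cons_cons.2 ⟨fun h => huv (Fin.castSucc_injective n h), hih⟩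
      · rw [hE] at hih ⊢
        refine List.isChain_cons_cons.2 ⟨?_, List.isChain_cons_cons.2 ⟨?_, hih⟩⟩
        · exact (Fin.castSucc_lt_last u).ne
        · exact (Fin.castSucc_lt_last v).ne'

lemma expand_head (n w) (u : Fin n) (l : List (Fin n)) :
    ∃ E, expand n w (u :: l) = u.castSucc :: E := expand_cons n w u l

lemma expand_getLast (n w) : ∀ l : List (Fin n),
    (expand n w l).getLast? = l.getLast?.map Fin.castSucc := by
  intro l
  induction l with
  | nil => simp [expand]
  | cons u l ih =>
    cases l with
    | nil => simp [expand]
    | cons v rest =>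
      obtain ⟨E, hE⟩ := expand_cons n w v rest
      have hne : expand n w (v :: rest) ≠ [] := by rw [hE]; simp
      simp only [expand]
      split
      · rw [hE, List.getLast?_cons_cons, ← hE, ih, List.getLast?_cons_cons]
      · rw [hE, List.getLast?_cons_cons, List.getLast?_cons_cons, ← hE, ih,
          List.getLast?_cons_cons]

lemma expand_ne_nil (n w) (u : Fin n) (l : List (Fin n)) :
    expand n w (u :: l) ≠ [] := by
  obtain ⟨E, hE⟩ := expand_cons n w u l
  rw [hE]; simp

lemma expand_length (n w) : ∀ l : List (Fin n), l.length ≤ (expand n w l).length := by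
  intro l
  induction l with
  | nil => simp [expand]
  | cons u l ih =>
    cases l with
    | nil => simp [expand]
    | cons v rest =>
      simp only [expand]
      split
      · simpa using Nat.succ_le_succ ih
      · simp only [List.length_cons] at ih ⊢
        omega

lemma cw_red (n : ℕ) (w : Fin (n+1) → Fin (n+1) → ℝ) (hcw : CW w) : CW (wred n w) := by
  intro v c hc hch
  simp only [List.cons_append] at hch ⊢
  obtain ⟨M, hM⟩ := expand_cons n w v (c ++ [v])
  have hlen := expand_length n w (v :: (c ++ [v]))
  rw [hM] at hlen
  simp only [List.length_cons, List.length_append] at hlen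
  have hcpos : 1 ≤ c.length := List.length_pos_iff.2 hc
  have hMlen : 2 ≤ M.length := by omega
  have hMne : M ≠ [] := by
    intro h; subst h; simp at hMlen
  have hlast : M.getLast? = some v.castSucc := by
    have h1 : (expand n w (v :: (c ++ [v]))).getLast? = some v.castSucc := by
      rw [expand_getLast]
      rw [show v :: (c ++ [v]) = (v :: c) ++ [v] by simp, List.getLast?_concat]
      simp
    rw [hM] at h1
    cases M with
    | nil => exact absurd rfl hMne
    | cons m M' => rwa [List.getLast?_cons_cons] at h1
  have hlast2 : M.getLast hMne = v.castSucc := by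
    have := List.getLast?_eq_getLast hMne
    rw [this] at hlast
    exact Option.some.inj hlast
  have hMsplit : M.dropLast ++ [v.castSucc] = M := by
    rw [← hlast2]; exact List.dropLast_concat_getLast hMne
  have hdne : M.dropLast ≠ [] := by
    intro h
    have := congrArg List.length hMsplit
    rw [h] at this; simp at this; omega
  have hchE : List.Chain' Ne (v.castSucc :: (M.dropLast ++ [v.castSucc])) := by
    have h := expand_chain n w (v :: (c ++ [v])) hch
    rw [hM, ← hMsplit] at h
    exact h
  have hpos := hcw v.castSucc M.dropLast hdne (by simpa using hchE)
  have hpw : pw w (v.castSucc :: M.dropLast ++ [v.castSucc]) = pw (wred n w) (v :: (c ++ [v])) := by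
    rw [← pw_expand, hM]
    congr 1
    simp [hMsplit]
  rw [hpw] at hpos
  exact hpos

lemma potential : ∀ (n : ℕ) (w : Fin n → Fin n → ℝ), CW w →
    ∃ μ : Fin n → ℝ, ∀ t τ, t ≠ τ → μ t - μ τ < w t τ := by
  intro n
  induction n with
  | zero => intro w _; exact ⟨fun _ => 0, fun t => t.elim0⟩
  | succ n ih =>
    intro w hcw
    obtain ⟨μ', hμ'⟩ := ih (wred n w) (cw_red n w hcw)
    obtain ⟨c, hc1, hc2⟩ : ∃ c : ℝ,
        (∀ σ : Fin n, μ' σ - w σ.castSucc (Fin.last n) < c) ∧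
        (∀ τ : Fin n, c < μ' τ + w (Fin.last n) τ.castSucc) := by
      rcases Nat.eq_zero_or_pos n with hn | hn
      · subst hn; exact ⟨0, fun σ => σ.elim0, fun τ => τ.elim0⟩
      · haveI : Nonempty (Fin n) := ⟨⟨0, hn⟩⟩
        have hA := Finset.univ_nonempty (α := Fin n)
        set A := Finset.univ.sup' hA (fun σ : Fin n => μ' σ - w σ.castSucc (Fin.last n)) with hAdef
        set B := Finset.univ.inf' hA (fun τ : Fin n => μ' τ + w (Fin.last n) τ.castSucc) with hBdef
        have hAB : A < B := by
          rw [hAdef, Finset.sup'_lt_iff]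
          intro σ _
          rw [hBdef, Finset.lt_inf'_iff]
          intro τ _
          by_cases hστ : σ = τ
          · subst hστ
            have hch : List.Chain' Ne (σ.castSucc :: [Fin.last n] ++ [σ.castSucc]) :=
              List.isChain_cons_cons.2 ⟨(Fin.castSucc_lt_last σ).ne,
                List.isChain_cons_cons.2 ⟨(Fin.castSucc_lt_last σ).ne', List.isChain_singleton _⟩⟩
            have h2 := hcw σ.castSucc [Fin.last n] (by simp) hch
            simp only [List.cons_append, List.singleton_append, List.nil_append, pw] at h2
            linarith
          · have h1 := hμ' σ τ hστ
            have h2 : wred n w σ τ ≤ w σ.castSucc (Fin.last n) + w (Fin.last n) τ.castSucc :=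
              min_le_right _ _
            linarith
        refine ⟨(A + B) / 2, fun σ => ?_, fun τ => ?_⟩
        · have h := Finset.le_sup' (f := fun σ : Fin n => μ' σ - w σ.castSucc (Fin.last n))
            (b := σ) (Finset.mem_univ σ)
          rw [← hAdef] at h
          linarith
        · have h := Finset.inf'_le (f := fun τ : Fin n => μ' τ + w (Fin.last n) τ.castSucc)
            (b := τ) (Finset.mem_univ τ)
          rw [← hBdef] at h
          linarith
    refine ⟨Fin.lastCases c μ', ?_⟩
    intro t τ hne
    rcases Fin.eq_castSucc_or_eq_last t with ⟨σ0, rfl⟩ | rfl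
    · rcases Fin.eq_castSucc_or_eq_last τ with ⟨τ0, rfl⟩ | rfl
      · have hne' : σ0 ≠ τ0 := fun h => hne (by rw [h])
        have h1 := hμ' σ0 τ0 hne'
        have h2 : wred n w σ0 τ0 ≤ w σ0.castSucc τ0.castSucc := min_le_left _ _
        simp only [Fin.lastCases_castSucc]
        linarith
      · have := hc1 σ0
        simp only [Fin.lastCases_castSucc, Fin.lastCases_last]
        linarith
    · rcases Fin.eq_castSucc_or_eq_last τ with ⟨τ0, rfl⟩ | rfl
      · have := hc2 τ0
        simp only [Fin.lastCases_castSucc, Fin.lastCases_last]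
        linarith
      · exact absurd rfl hne


lemma sc_of_fin (T : ℕ) (w : Fin T → Fin T → ℝ)
    (h : ∀ (k : ℕ), 2 ≤ k → ∀ t : Fin k → Fin T, Function.Injective t →
      0 < ∑ i : Fin k, w (t (cyc i)) (t i)) :
    ∀ (v : Fin T) (c : List (Fin T)), c ≠ [] → (v :: c).Nodup →
      0 < pw w (v :: c ++ [v]) := by
  intro v c hc hnd
  set d := v :: c with hd
  set k := d.length with hk
  have hck : 1 ≤ c.length := List.length_pos_iff.2 hc
  have hkc : k = c.length + 1 := by simp [hk, hd]
  have hk2 : 2 ≤ k := by omega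
  set t : Fin k → Fin T := fun i => d.get i with ht
  have hinj : Function.Injective t := List.nodup_iff_injective_get.1 hnd
  have hpos := h k hk2 t hinj
  have heq : pw w (v :: c ++ [v]) = ∑ i : Fin k, w (t (cyc i)) (t i) := by
    have hwalk : v :: c ++ [v] = d ++ [v] := by simp [hd]
    rw [hwalk, pw_eq_sum w v]
    have hlen : (d ++ [v]).length - 1 = k := by simp [hk]
    rw [hlen,
      ← Fin.sum_univ_eq_sum_range (fun i => w ((d ++ [v]).getD (i+1) v) ((d ++ [v]).getD i v)) k]
    refine Finset.sum_congr rfl (fun i _ => ?_)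
    have hik : i.val < k := i.isLt
    have hdlen : d.length = k := hk.symm
    have h1 : (d ++ [v]).getD i.val v = t i := by
      rw [List.getD_eq_getElem?_getD, List.getElem?_append_left (by omega),
        List.getElem?_eq_getElem (by omega)]
      simp [ht, List.get_eq_getElem]
    have h2 : (d ++ [v]).getD (i.val + 1) v = t (cyc i) := by
      by_cases hlt : i.val + 1 < k
      · rw [List.getD_eq_getElem?_getD, List.getElem?_append_left (by omega),
          List.getElem?_eq_getElem (by omega)]
        have hcyc : (cyc i).val = i.val + 1 := Nat.mod_eq_of_lt (by omega)
        simp only [ht, List.get_eq_getElem, hcyc, Option.getD_some]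
      · have hik1 : i.val + 1 = k := by omega
        rw [List.getD_eq_getElem?_getD, List.getElem?_append_right (by omega)]
        have hcyc : (cyc i).val = 0 := by
          simp only [cyc, hik1]; exact Nat.mod_self k
        have : i.val + 1 - d.length = 0 := by omega
        rw [this]
        simp only [ht, List.get_eq_getElem, hcyc]
        simp [hd]
    rw [h1, h2]
  rw [heq]; exact hpos


end AfriatAux

lemma cyc_ne {k : ℕ} (hk : 2 ≤ k) (i : Fin k) : cyc i ≠ i := by
  intro h
  have hval : (i.val + 1) % k = i.val := congrArg Fin.val h
  have hi := i.isLt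
  by_cases hik : i.val + 1 = k
  · rw [hik, Nat.mod_self] at hval; omega
  · rw [Nat.mod_eq_of_lt (by omega)] at hval; omega

lemma afriat_forward (T : ℕ) (a : Fin T → Fin T → ℝ) (ha : ∀ t τ, 0 < a t τ)
    (l : Fin T → ℝ) (hl : ∀ t, 0 < l t)
    (hsys : ∀ t τ, t ≠ τ → l t * a t t < l τ * a t τ) :
    (∀ (k : ℕ), 2 ≤ k → ∀ t : Fin k → Fin T, Function.Injective t →
      (∏ i : Fin k, a (t (cyc i)) (t i)) > (∏ i : Fin k, a (t i) (t i))) := by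
  intro k hk t ht
  have hne : (Finset.univ : Finset (Fin k)).Nonempty := by
    have : 0 < k := by omega
    exact ⟨⟨0, this⟩, Finset.mem_univ _⟩
  have key : ∏ i : Fin k, (l (t (cyc i)) * a (t (cyc i)) (t (cyc i))) <
      ∏ i : Fin k, (l (t i) * a (t (cyc i)) (t i)) := by
    refine Finset.prod_lt_prod_of_nonempty (fun i _ => ?_) (fun i _ => ?_) hne
    · exact mul_pos (hl _) (ha _ _)
    · exact hsys _ _ (fun h => cyc_ne hk i (ht h))
  rw [Finset.prod_mul_distrib, Finset.prod_mul_distrib] at key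
  have hb1 : ∏ i : Fin k, l (t (cyc i)) = ∏ i : Fin k, l (t i) :=
    cyc_bijective.prod_comp (fun i => l (t i))
  have hb2 : ∏ i : Fin k, a (t (cyc i)) (t (cyc i)) = ∏ i : Fin k, a (t i) (t i) :=
    cyc_bijective.prod_comp (fun i => a (t i) (t i))
  rw [hb1, hb2] at key
  have hlpos : 0 < ∏ i : Fin k, l (t i) := Finset.prod_pos (fun i _ => hl _)
  exact lt_of_mul_lt_mul_left key (le_of_lt hlpos)


/-- Strict version of the Afriat cycle condition: for positive data `a t τ`,
the strict system `λ_t a_{tt} < λ_τ a_{tτ}` for all `t ≠ τ` (with `λ_t > 0`)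
is consistent iff for every cyclic sequence of `k ≥ 2` distinct indices the
cyclic product strictly dominates the diagonal product. -/
theorem afriat_strict_cycle_condition (T : ℕ) (a : Fin T → Fin T → ℝ)
    (ha : ∀ t τ, 0 < a t τ) :
    (∃ l : Fin T → ℝ, (∀ t, 0 < l t) ∧
        ∀ t τ, t ≠ τ → l t * a t t < l τ * a t τ) ↔
    (∀ (k : ℕ), 2 ≤ k → ∀ t : Fin k → Fin T, Function.Injective t →
      (∏ i : Fin k, a (t (cyc i)) (t i)) > (∏ i : Fin k, a (t i) (t i))) := by
  constructor
  · rintro ⟨l, hl, hsys⟩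
    exact afriat_forward T a ha l hl hsys
  · intro H
    set w : Fin T → Fin T → ℝ := fun t τ => Real.log (a t τ) - Real.log (a t t) with hw
    have hsum : ∀ (k : ℕ), 2 ≤ k → ∀ t : Fin k → Fin T, Function.Injective t →
        0 < ∑ i : Fin k, w (t (cyc i)) (t i) := by
      intro k hk t ht
      have hprod := H k hk t ht
      have hsplit : ∑ i : Fin k, w (t (cyc i)) (t i) =
          (∑ i : Fin k, Real.log (a (t (cyc i)) (t i))) -
          (∑ i : Fin k, Real.log (a (t (cyc i)) (t (cyc i)))) := by
        rw [← Finset.sum_sub_distrib]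
      have hb : ∑ i : Fin k, Real.log (a (t (cyc i)) (t (cyc i))) =
          ∑ i : Fin k, Real.log (a (t i) (t i)) :=
        cyc_bijective.sum_comp (fun i => Real.log (a (t i) (t i)))
      rw [hsplit, hb, ← Real.log_prod (fun i _ => (ha _ _).ne'),
        ← Real.log_prod (fun i _ => (ha _ _).ne'), sub_pos]
      exact Real.log_lt_log (Finset.prod_pos fun i _ => ha _ _) hprod
    have hcw : CW w := sc_to_cw w (sc_of_fin T w hsum)
    obtain ⟨μ, hμ⟩ := potential T w hcw
    refine ⟨fun t => Real.exp (μ t), fun t => Real.exp_pos _, ?_⟩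
    intro t τ htτ
    have h1 := hμ t τ htτ
    have h2 : μ t + Real.log (a t t) < μ τ + Real.log (a t τ) := by
      simp only [hw] at h1; linarith
    have h3 := Real.exp_lt_exp.2 h2
    rwa [Real.exp_add, Real.exp_add, Real.exp_log (ha t t), Real.exp_log (ha t τ)] at h3
end

section
/- Let K ⊆ ℝ^n be a closed convex set with nonempty boundary, and for each boundary point y let n(y) be a unit outer normal at y. Define q-ind_K(x) = 1 for x ∈ K and q-ind_K(x) = inf_{y ∈ Bd(K)} (1 − n(y)·(x − y)) otherwise. Then q-ind_K is a concave function on ℝ^n. -/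
open scoped InnerProductSpace
open Classical

/-- `f x` is below every affine function `1 - ⟪ν y, · - y⟫` for `y ∈ frontier K`. -/
theorem quasi_indicator_le_affine (n : ℕ)
    (K : Set (EuclideanSpace ℝ (Fin n)))
    (hK : IsClosed K)
    (hbd : (frontier K).Nonempty)
    (ν : EuclideanSpace ℝ (Fin n) → EuclideanSpace ℝ (Fin n))
    (hν : ∀ y ∈ frontier K, ‖ν y‖ = 1 ∧ ∀ x ∈ K, ⟪ν y, x - y⟫_ℝ ≤ 0)
    (f : EuclideanSpace ℝ (Fin n) → ℝ)
    (hf : ∀ x, f x = if x ∈ K then 1 else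
      sInf {r : ℝ | ∃ y ∈ frontier K, r = 1 - ⟪ν y, x - y⟫_ℝ})
    (x y : EuclideanSpace ℝ (Fin n)) (hy : y ∈ frontier K) :
    f x ≤ 1 - ⟪ν y, x - y⟫_ℝ := by
  obtain ⟨p₀, hp₀⟩ := hbd
  have hp₀K : p₀ ∈ K := hK.frontier_subset hp₀
  rw [hf]
  split_ifs with hxK
  · have := (hν y hy).2 x hxK
    linarith
  · apply csInf_le
    · refine ⟨1 - ‖x - p₀‖, ?_⟩
      rintro r ⟨y', hy', rfl⟩
      obtain ⟨hn1, hn2⟩ := hν y' hy'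
      have h1 : ⟪ν y', p₀ - y'⟫_ℝ ≤ 0 := hn2 p₀ hp₀K
      have h2 : ⟪ν y', x - p₀⟫_ℝ ≤ ‖x - p₀‖ := by
        calc ⟪ν y', x - p₀⟫_ℝ ≤ ‖ν y'‖ * ‖x - p₀‖ := real_inner_le_norm _ _
        _ = ‖x - p₀‖ := by rw [hn1, one_mul]
      have h3 : x - y' = (x - p₀) + (p₀ - y') := by abel
      rw [h3, inner_add_right]
      linarith
    · exact ⟨y, hy, rfl⟩

/-- Key step: if `x ∉ K` but the convex combination lies in `K`, then the
combination of values is at most `1`. -/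
theorem quasi_indicator_key (n : ℕ)
    (K : Set (EuclideanSpace ℝ (Fin n)))
    (hK : IsClosed K)
    (hbd : (frontier K).Nonempty)
    (ν : EuclideanSpace ℝ (Fin n) → EuclideanSpace ℝ (Fin n))
    (hν : ∀ y ∈ frontier K, ‖ν y‖ = 1 ∧ ∀ x ∈ K, ⟪ν y, x - y⟫_ℝ ≤ 0)
    (f : EuclideanSpace ℝ (Fin n) → ℝ)
    (hf : ∀ x, f x = if x ∈ K then 1 else
      sInf {r : ℝ | ∃ y ∈ frontier K, r = 1 - ⟪ν y, x - y⟫_ℝ})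
    (x z : EuclideanSpace ℝ (Fin n)) (a b : ℝ)
    (ha : 0 ≤ a) (hb : 0 ≤ b) (hab : a + b = 1)
    (hx : x ∉ K) (hw : a • x + b • z ∈ K) :
    a * f x + b * f z ≤ 1 := by
  obtain rfl : a = 1 - b := by linarith
  have hb1 : b ≤ 1 := by linarith
  set γ : ℝ → EuclideanSpace ℝ (Fin n) := fun t => x + t • (z - x) with hγdef
  have hγcont : Continuous γ := by
    apply continuous_const.add
    exact continuous_id.smul continuous_const
  have hγdiff : ∀ s t : ℝ, γ t - γ s = (t - s) • (z - x) := by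
    intro s t
    simp only [hγdef]
    rw [sub_smul]
    abel
  have hγb : γ b = (1 - b) • x + b • z := by
    simp only [hγdef]
    module
  have hγ0 : γ 0 = x := by simp [hγdef]
  have hγ1 : γ 1 = z := by simp [hγdef]
  set S : Set ℝ := Set.Icc (0:ℝ) 1 ∩ γ ⁻¹' K with hSdef
  have hScl : IsClosed S := isClosed_Icc.inter (hK.preimage hγcont)
  have hScompact : IsCompact S := isCompact_Icc.of_isClosed_subset hScl Set.inter_subset_left
  have hbS : b ∈ S := ⟨⟨hb, hb1⟩, by rw [Set.mem_preimage, hγb]; exact hw⟩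
  obtain ⟨t₁, ht₁S, ht₁lb⟩ := hScompact.exists_isLeast ⟨b, hbS⟩
  have h0t₁ : 0 ≤ t₁ := ht₁S.1.1
  have ht₁1 : t₁ ≤ 1 := ht₁S.1.2
  have ht₁b : t₁ ≤ b := ht₁lb hbS
  have hy₁K : γ t₁ ∈ K := ht₁S.2
  have ht₁pos : 0 < t₁ := by
    rcases h0t₁.lt_or_eq with h | h
    · exact h
    · exfalso; apply hx; rw [← hγ0, h]; exact hy₁K
  -- γ t₁ is a frontier point
  have hy₁fr : γ t₁ ∈ frontier K := by
    rw [frontier_eq_closure_inter_closure, hK.closure_eq]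
    refine ⟨hy₁K, ?_⟩
    rw [mem_closure_iff_seq_limit]
    refine ⟨fun m : ℕ => γ (t₁ - t₁ / (m + 1)), fun m => ?_, ?_⟩
    · intro hmem
      have hm0 : (0:ℝ) < (m:ℝ) + 1 := by positivity
      have hdiv : 0 < t₁ / ((m:ℝ) + 1) := div_pos ht₁pos hm0
      have hle' : t₁ / ((m:ℝ) + 1) ≤ t₁ := by
        rw [div_le_iff₀ hm0]
        exact le_mul_of_one_le_right h0t₁ (by norm_num)
      have hSm : t₁ - t₁ / ((m:ℝ) + 1) ∈ S :=
        ⟨⟨by linarith, by linarith⟩, hmem⟩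
      have := ht₁lb hSm
      linarith
    · have h1 : Filter.Tendsto (fun m : ℕ => t₁ - t₁ / ((m:ℝ) + 1)) Filter.atTop (nhds t₁) := by
        have h2 : Filter.Tendsto (fun m : ℕ => t₁ / ((m:ℝ) + 1)) Filter.atTop (nhds 0) := by
          have := tendsto_one_div_add_atTop_nhds_zero_nat.const_mul t₁
          simpa [mul_one_div, div_eq_mul_inv] using this
        have h3 := h2.const_sub t₁
        simpa using h3
      exact (hγcont.tendsto t₁).comp h1
  obtain ⟨hn1, hn2⟩ := hν (γ t₁) hy₁fr
  have hinner : ∀ t : ℝ, ⟪ν (γ t₁), γ t - γ t₁⟫_ℝ = (t - t₁) * ⟪ν (γ t₁), z - x⟫_ℝ := by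
    intro t
    rw [hγdiff, real_inner_smul_right]
  have hfx' := quasi_indicator_le_affine n K hK hbd ν hν f hf x (γ t₁) hy₁fr
  have hfz' := quasi_indicator_le_affine n K hK hbd ν hν f hf z (γ t₁) hy₁fr
  rcases eq_or_lt_of_le ht₁b with h | h
  · -- t₁ = b: the combination point is γ t₁ itself
    have hcomb : ⟪ν (γ t₁), ((1-b)•x + b•z) - γ t₁⟫_ℝ
        = (1-b) * ⟪ν (γ t₁), x - γ t₁⟫_ℝ + b * ⟪ν (γ t₁), z - γ t₁⟫_ℝ := by
      have hveq : ((1-b)•x + b•z) - γ t₁ = (1-b)•(x - γ t₁) + b•(z - γ t₁) := by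
        module
      rw [hveq, inner_add_right, real_inner_smul_right, real_inner_smul_right]
    have hzero : ⟪ν (γ t₁), ((1-b)•x + b•z) - γ t₁⟫_ℝ = 0 := by
      have hveq0 : ((1-b):ℝ) • x + b • z - γ t₁ = 0 := by
        rw [← hγb, ← h, sub_self]
      rw [hveq0, inner_zero_right]
    have hAB : (1-b) * ⟪ν (γ t₁), x - γ t₁⟫_ℝ + b * ⟪ν (γ t₁), z - γ t₁⟫_ℝ = 0 := by
      rw [← hcomb]; exact hzero
    have e1 := mul_le_mul_of_nonneg_left hfx' ha
    have e2 := mul_le_mul_of_nonneg_left hfz' hb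
    have e3 : (1-b) * (1 - ⟪ν (γ t₁), x - γ t₁⟫_ℝ) + b * (1 - ⟪ν (γ t₁), z - γ t₁⟫_ℝ) = 1 := by
      linear_combination -hAB
    linarith
  · -- t₁ < b
    set c : ℝ := ⟪ν (γ t₁), z - x⟫_ℝ with hcdef
    have hwle : ⟪ν (γ t₁), γ b - γ t₁⟫_ℝ ≤ 0 := by
      apply hn2
      rw [hγb]; exact hw
    rw [hinner b] at hwle
    have hc : c ≤ 0 := by
      rcases mul_nonpos_iff.mp hwle with ⟨h1, h2⟩ | ⟨h1, h2⟩
      · exact h2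
      · linarith
    have hfx1 : f x ≤ 1 := by
      have h0 : ⟪ν (γ t₁), x - γ t₁⟫_ℝ = (0 - t₁) * c := by
        rw [← hγ0, hinner 0]
      have h1 : t₁ * c ≤ 0 := mul_nonpos_of_nonneg_of_nonpos h0t₁ hc
      nlinarith [hfx', h0, h1]
    by_cases hzK : z ∈ K
    · have hfz1 : f z = 1 := by rw [hf, if_pos hzK]
      have e1 := mul_le_mul_of_nonneg_left hfx1 ha
      rw [hfz1]
      linarith
    · -- z ∉ K: take the greatest element of S
      obtain ⟨t₂, ht₂S, ht₂ub⟩ := hScompact.exists_isGreatest ⟨b, hbS⟩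
      have ht₂1 : t₂ ≤ 1 := ht₂S.1.2
      have hbt₂ : b ≤ t₂ := ht₂ub hbS
      have hy₂K : γ t₂ ∈ K := ht₂S.2
      have ht₂lt1 : t₂ < 1 := by
        rcases ht₂1.lt_or_eq with h' | h'
        · exact h'
        · exfalso; apply hzK; rw [← hγ1, ← h']; exact hy₂K
      have hy₂fr : γ t₂ ∈ frontier K := by
        rw [frontier_eq_closure_inter_closure, hK.closure_eq]
        refine ⟨hy₂K, ?_⟩
        rw [mem_closure_iff_seq_limit]
        refine ⟨fun m : ℕ => γ (t₂ + (1 - t₂) / (m + 1)), fun m => ?_, ?_⟩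
        · intro hmem
          have hm0 : (0:ℝ) < (m:ℝ) + 1 := by positivity
          have hdiv : 0 < (1 - t₂) / ((m:ℝ) + 1) := div_pos (by linarith) hm0
          have hle' : (1 - t₂) / ((m:ℝ) + 1) ≤ 1 - t₂ := by
            rw [div_le_iff₀ hm0]
            exact le_mul_of_one_le_right (by linarith) (by norm_num)
          have hSm : t₂ + (1 - t₂) / ((m:ℝ) + 1) ∈ S :=
            ⟨⟨by linarith [ht₂S.1.1], by linarith⟩, hmem⟩
          have := ht₂ub hSm
          linarith
        · have h1 : Filter.Tendsto (fun m : ℕ => t₂ + (1 - t₂) / ((m:ℝ) + 1))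
              Filter.atTop (nhds t₂) := by
            have h2 : Filter.Tendsto (fun m : ℕ => (1 - t₂) / ((m:ℝ) + 1))
                Filter.atTop (nhds 0) := by
              have := tendsto_one_div_add_atTop_nhds_zero_nat.const_mul (1 - t₂)
              simpa [mul_one_div, div_eq_mul_inv] using this
            have h3 := h2.const_add t₂
            simpa using h3
          exact (hγcont.tendsto t₂).comp h1
      obtain ⟨hm1, hm2⟩ := hν (γ t₂) hy₂fr
      set c₂ : ℝ := ⟪ν (γ t₂), z - x⟫_ℝ with hc₂def
      have hinner2 : ∀ t : ℝ, ⟪ν (γ t₂), γ t - γ t₂⟫_ℝ = (t - t₂) * c₂ := by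
        intro t
        rw [hγdiff, real_inner_smul_right]
      have hψt₁ : ⟪ν (γ t₂), γ t₁ - γ t₂⟫_ℝ ≤ 0 := hm2 _ hy₁K
      have hψt₁' : (t₁ - t₂) * c₂ ≤ 0 := by rw [← hinner2]; exact hψt₁
      have ht₁t₂' : t₁ < t₂ := lt_of_lt_of_le h hbt₂
      have hc₂ : 0 ≤ c₂ := by
        rcases mul_nonpos_iff.mp hψt₁' with ⟨h1, h2⟩ | ⟨h1, h2⟩
        · linarith
        · exact h2
      have hfz1 : f z ≤ 1 := by
        have hfz'' := quasi_indicator_le_affine n K hK hbd ν hν f hf z (γ t₂) hy₂fr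
        have h0 : ⟪ν (γ t₂), z - γ t₂⟫_ℝ = (1 - t₂) * c₂ := by
          rw [← hγ1, hinner2]
        have h1 : 0 ≤ (1 - t₂) * c₂ := mul_nonneg (by linarith) hc₂
        linarith
      have e1 := mul_le_mul_of_nonneg_left hfx1 ha
      have e2 := mul_le_mul_of_nonneg_left hfz1 hb
      linarith

open Classical in
/-- The quasi-indicator of a closed convex set `K` with respect to a selection
`ν` of unit outer normals at boundary points (equal to `1` on `K`, and to
`inf_{y ∈ Bd K} (1 − ⟪ν y, x − y⟫)` outside) is concave. -/
theorem quasi_indicator_concave (n : ℕ)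
    (K : Set (EuclideanSpace ℝ (Fin n)))
    (hK : IsClosed K) (hKconv : Convex ℝ K)
    (hbd : (frontier K).Nonempty)
    (ν : EuclideanSpace ℝ (Fin n) → EuclideanSpace ℝ (Fin n))
    (hν : ∀ y ∈ frontier K, ‖ν y‖ = 1 ∧ ∀ x ∈ K, ⟪ν y, x - y⟫_ℝ ≤ 0)
    (f : EuclideanSpace ℝ (Fin n) → ℝ)
    (hf : ∀ x, f x = if x ∈ K then 1 else
      sInf {r : ℝ | ∃ y ∈ frontier K, r = 1 - ⟪ν y, x - y⟫_ℝ}) :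
    ConcaveOn ℝ Set.univ f := by
  refine ⟨convex_univ, ?_⟩
  intro x _ z _ a b ha hb hab
  simp only [smul_eq_mul]
  by_cases hw : a • x + b • z ∈ K
  · -- combination lies in K : f = 1 there
    rw [hf (a • x + b • z), if_pos hw]
    by_cases hxK : x ∈ K
    · by_cases hzK : z ∈ K
      · rw [hf x, if_pos hxK, hf z, if_pos hzK]
        linarith
      · -- x ∈ K, z ∉ K: apply the key lemma with roles swapped
        have hw' : b • z + a • x ∈ K := by rwa [add_comm]
        have := quasi_indicator_key n K hK hbd ν hν f hf z x b a hb ha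
          (by linarith) hzK hw'
        linarith
    · have := quasi_indicator_key n K hK hbd ν hν f hf x z a b ha hb hab hxK hw
      linarith
  · -- combination lies outside K
    obtain ⟨p₀, hp₀⟩ := hbd
    rw [hf (a • x + b • z), if_neg hw]
    refine le_csInf ⟨1 - ⟪ν p₀, (a • x + b • z) - p₀⟫_ℝ, p₀, hp₀, rfl⟩ ?_
    rintro r ⟨y, hy, rfl⟩
    have hveq : (a • x + b • z) - y = a • (x - y) + b • (z - y) := by
      obtain rfl : a = 1 - b := by linarith
      module
    have hcomb : ⟪ν y, (a • x + b • z) - y⟫_ℝ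
        = a * ⟪ν y, x - y⟫_ℝ + b * ⟪ν y, z - y⟫_ℝ := by
      rw [hveq, inner_add_right, real_inner_smul_right, real_inner_smul_right]
    have hx' := quasi_indicator_le_affine n K hK ⟨p₀, hp₀⟩ ν hν f hf x y hy
    have hz' := quasi_indicator_le_affine n K hK ⟨p₀, hp₀⟩ ν hν f hf z y hy
    have e1 := mul_le_mul_of_nonneg_left hx' ha
    have e2 := mul_le_mul_of_nonneg_left hz' hb
    have e3 : a * (1 - ⟪ν y, x - y⟫_ℝ) + b * (1 - ⟪ν y, z - y⟫_ℝ)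
        = 1 - ⟪ν y, (a • x + b • z) - y⟫_ℝ := by
      rw [hcomb]; linear_combination (hab : a + b = 1)
    linarith
end

section
/- Let H = {x ∈ ℝ^n : a·x ≤ 0} be a halfspace through the origin (a ≠ 0), h a nonnegative spherically symmetric C^k mollifier supported in B(0, ε) with ∫ h = 1, and α = ∫ q-ind_H(x − c) h(c) dc evaluated at any x ∈ Bd(H). Then for f = q-ind_H ∗ h, the level set {x : f(x) ≥ α} equals H. -/
open MeasureTheory
open scoped InnerProductSpace

/-- Smoothing Lemma for a halfspace: if `H = {x : ⟪a,x⟫ ≤ 0}` is a halfspace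
through the origin, `h` a nonnegative spherically symmetric `C^k` mollifier
supported in `B(0,ε)` of unit mass, `f = q-ind_H ∗ h`, and `α` is the value of
`f` at a boundary point of `H`, then `{x : f x ≥ α} = H`. -/
theorem halfspace_convolution_level_set (n : ℕ) (k : ℕ)
    (a : EuclideanSpace ℝ (Fin n)) (ha : a ≠ 0)
    (qind : EuclideanSpace ℝ (Fin n) → ℝ)
    (hqind : ∀ x, qind x = 1 - max 0 (⟪a, x⟫_ℝ / ‖a‖))
    (h : EuclideanSpace ℝ (Fin n) → ℝ)
    (hh0 : ∀ x, 0 ≤ h x)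
    (hhsmooth : ContDiff ℝ (k : ℕ∞) h)
    (hhsym : ∀ x y : EuclideanSpace ℝ (Fin n), ‖x‖ = ‖y‖ → h x = h y)
    (ε : ℝ) (hε : 0 < ε)
    (hhsupp : Function.support h ⊆ Metric.ball 0 ε)
    (hhmass : ∫ x, h x = 1)
    (f : EuclideanSpace ℝ (Fin n) → ℝ)
    (hf : ∀ x, f x = ∫ c, qind (x - c) * h c)
    (x₀ : EuclideanSpace ℝ (Fin n)) (hx₀ : ⟪a, x₀⟫_ℝ = 0)
    (α : ℝ) (hα : α = f x₀) :
    {x : EuclideanSpace ℝ (Fin n) | α ≤ f x} =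
      {x : EuclideanSpace ℝ (Fin n) | ⟪a, x⟫_ℝ ≤ 0} := by
  have hnorm : (0:ℝ) < ‖a‖ := norm_pos_iff.mpr ha
  have hch : Continuous h := hhsmooth.continuous
  have hcs : HasCompactSupport h := by
    apply HasCompactSupport.of_support_subset_isCompact (isCompact_closedBall (0 : EuclideanSpace ℝ (Fin n)) ε)
    exact hhsupp.trans Metric.ball_subset_closedBall
  have hint_h : Integrable h := hch.integrable_of_hasCompactSupport hcs
  have hconts : Continuous fun c : EuclideanSpace ℝ (Fin n) => ⟪a, c⟫_ℝ / ‖a‖ :=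
    (continuous_const.inner continuous_id).div_const _
  set g : ℝ → ℝ := fun t => ∫ c, max 0 (t - ⟪a, c⟫_ℝ / ‖a‖) * h c with hg
  have hint : ∀ t : ℝ, Integrable (fun c : EuclideanSpace ℝ (Fin n) =>
      max 0 (t - ⟪a, c⟫_ℝ / ‖a‖) * h c) := by
    intro t
    exact ((continuous_const.max (continuous_const.sub hconts)).mul hch).integrable_of_hasCompactSupport
      hcs.mul_left
  have hf' : ∀ x, f x = 1 - g (⟪a, x⟫_ℝ / ‖a‖) := by
    intro x
    rw [hf, hg]
    have heq : ∀ c : EuclideanSpace ℝ (Fin n),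
        qind (x - c) * h c = h c - max 0 (⟪a, x⟫_ℝ / ‖a‖ - ⟪a, c⟫_ℝ / ‖a‖) * h c := by
      intro c
      rw [hqind, inner_sub_right, sub_div]
      ring
    simp_rw [heq]
    rw [integral_sub hint_h (hint _), hhmass]
  have hmono : ∀ t₁ t₂ : ℝ, t₁ ≤ t₂ → g t₁ ≤ g t₂ := by
    intro t₁ t₂ hle
    refine integral_mono (hint t₁) (hint t₂) fun c => ?_
    exact mul_le_mul_of_nonneg_right (max_le_max le_rfl (by linarith)) (hh0 c)
  -- the halfspace carries mass at least 1/2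
  set S : Set (EuclideanSpace ℝ (Fin n)) := {c | ⟪a, c⟫_ℝ ≤ 0} with hS
  have hSmeas : MeasurableSet S :=
    (isClosed_le (continuous_const.inner continuous_id) continuous_const).measurableSet
  set S' : Set (EuclideanSpace ℝ (Fin n)) := {c | 0 ≤ ⟪a, c⟫_ℝ} with hS'
  have hS'meas : MeasurableSet S' :=
    (isClosed_le continuous_const (continuous_const.inner continuous_id)).measurableSet
  have hintS : Integrable (S.indicator h) := hint_h.indicator hSmeas
  have hintS' : Integrable (S'.indicator h) := hint_h.indicator hS'meas
  have hsym' : ∀ c, h (-c) = h c := fun c => hhsym _ _ (norm_neg c)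
  have hflip : (∫ c, S.indicator h c) = ∫ c, S'.indicator h c := by
    rw [← integral_neg_eq_self (S.indicator h)]
    congr 1
    ext c
    by_cases hc : c ∈ S'
    · have : -c ∈ S := by
        simp only [hS, Set.mem_setOf_eq, inner_neg_right]
        simpa [hS'] using hc
      rw [Set.indicator_of_mem this, Set.indicator_of_mem hc, hsym']
    · have : -c ∉ S := by
        simp only [hS, Set.mem_setOf_eq, inner_neg_right]
        simp only [hS', Set.mem_setOf_eq, not_le] at hc ⊢
        linarith
      rw [Set.indicator_of_notMem this, Set.indicator_of_notMem hc]
  have hhalf : (1:ℝ) / 2 ≤ ∫ c, S.indicator h c := by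
    have hle : (1:ℝ) ≤ ∫ c, (S.indicator h c + S'.indicator h c) := by
      rw [← hhmass]
      refine integral_mono hint_h (hintS.add hintS') fun c => ?_
      by_cases hc : c ∈ S
      · have := Set.indicator_nonneg (fun x _ => hh0 x) (s := S') c
        rw [Set.indicator_of_mem hc]; linarith
      · have hc' : c ∈ S' := by
          simp only [hS, Set.mem_setOf_eq, not_le] at hc
          exact le_of_lt hc
        have := Set.indicator_nonneg (fun x _ => hh0 x) (s := S) c
        rw [Set.indicator_of_mem hc']; linarith
    rw [integral_add hintS hintS', ← hflip] at hle
    linarith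
  have hIpos : (0:ℝ) < ∫ c, S.indicator h c := lt_of_lt_of_le (by norm_num) hhalf
  -- strict increase from 0
  have hstrict : ∀ t : ℝ, 0 < t → g 0 < g t := by
    intro t ht
    have key : g 0 + t * ∫ c, S.indicator h c ≤ g t := by
      rw [hg, ← integral_const_mul, ← integral_add (hint 0) ((hintS.const_mul t))]
      refine integral_mono ((hint 0).add (hintS.const_mul t)) (hint t) fun c => ?_
      by_cases hc : c ∈ S
      · have hc0 : ⟪a, c⟫_ℝ / ‖a‖ ≤ 0 := div_nonpos_of_nonpos_of_nonneg hc hnorm.le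
        rw [Set.indicator_of_mem hc]
        have h1 : max 0 (0 - ⟪a, c⟫_ℝ / ‖a‖) = -(⟪a, c⟫_ℝ / ‖a‖) := by
          rw [zero_sub]; exact max_eq_right (by linarith)
        have h2 : max 0 (t - ⟪a, c⟫_ℝ / ‖a‖) = t - ⟪a, c⟫_ℝ / ‖a‖ :=
          max_eq_right (by linarith)
        rw [h1, h2]; ring_nf; nlinarith [hh0 c]
      · have hc0 : 0 < ⟪a, c⟫_ℝ := by simpa [hS] using hc
        rw [Set.indicator_of_notMem hc]
        have h1 : max 0 (0 - ⟪a, c⟫_ℝ / ‖a‖) = 0 := by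
          rw [zero_sub]
          exact max_eq_left (neg_nonpos.mpr (div_pos hc0 hnorm).le)
        rw [h1, mul_zero, zero_mul, add_zero]
        exact mul_nonneg (le_max_left _ _) (hh0 c)
    nlinarith
  have hα' : α = 1 - g 0 := by
    rw [hα, hf' x₀, hx₀, zero_div]
  ext x
  simp only [Set.mem_setOf_eq]
  constructor
  · intro hx
    by_contra hpos
    have hpos' : 0 < ⟪a, x⟫_ℝ := by simpa [hS, not_le] using hpos
    have ht : 0 < ⟪a, x⟫_ℝ / ‖a‖ := div_pos hpos' hnorm
    have := hstrict _ ht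
    rw [hf', hα'] at hx
    linarith
  · intro hx
    have ht : ⟪a, x⟫_ℝ / ‖a‖ ≤ 0 := div_nonpos_of_nonpos_of_nonneg hx hnorm.le
    rw [hf', hα']
    have := hmono _ _ ht
    linarith
end

section
/- With notation as in the Smoothing Lemma, let x ∈ Bd(K) be such that B(x, ε) ∩ K = H_x ∩ B(x, ε) for some supporting halfspace H_x of K at x (local flatness). Then (q-ind_K ∗ h)(x) = α, where α is the common value of q-ind_H ∗ h on the boundary of a halfspace. -/
set_option maxHeartbeats 1000000


open MeasureTheory
open scoped InnerProductSpace
open Classical in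
/-- Smoothing Lemma (iii): if the boundary of the closed convex set `K` is
locally flat at `x` (i.e. `B(x,ε) ∩ K = B(x,ε) ∩ H_x` for a supporting
halfspace `H_x` at `x`), then the convolution `q-ind_K ∗ h` takes the value
`α` at `x`, where `α` is the common value of `q-ind_H ∗ h` on the boundary
of a halfspace. -/
theorem convolution_flat_boundary_value (n : ℕ) (k : ℕ)
    (K : Set (EuclideanSpace ℝ (Fin n)))
    (hK : IsClosed K) (hKconv : Convex ℝ K)
    (ν : EuclideanSpace ℝ (Fin n) → EuclideanSpace ℝ (Fin n))
    (hν : ∀ y ∈ frontier K, ‖ν y‖ = 1 ∧ ∀ z ∈ K, ⟪ν y, z - y⟫_ℝ ≤ 0)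
    (qind : EuclideanSpace ℝ (Fin n) → ℝ)
    (hqind : ∀ x, qind x = if x ∈ K then 1 else
      sInf {r : ℝ | ∃ y ∈ frontier K, r = 1 - ⟪ν y, x - y⟫_ℝ})
    (h : EuclideanSpace ℝ (Fin n) → ℝ)
    (hh0 : ∀ x, 0 ≤ h x)
    (hhsmooth : ContDiff ℝ (k : ℕ∞) h)
    (hhsym : ∀ x y : EuclideanSpace ℝ (Fin n), ‖x‖ = ‖y‖ → h x = h y)
    (ε : ℝ) (hε : 0 < ε)
    (hhsupp : Function.support h ⊆ Metric.ball 0 ε)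
    (hhmass : ∫ x, h x = 1)
    (x : EuclideanSpace ℝ (Fin n)) (hx : x ∈ frontier K)
    (u : EuclideanSpace ℝ (Fin n)) (hu : ‖u‖ = 1)
    (hsupp : K ⊆ {z : EuclideanSpace ℝ (Fin n) | ⟪u, z - x⟫_ℝ ≤ 0})
    (hflat : Metric.closedBall x ε ∩ K =
      Metric.closedBall x ε ∩ {z : EuclideanSpace ℝ (Fin n) | ⟪u, z - x⟫_ℝ ≤ 0})
    (α : ℝ) (hα : α = ∫ c, (1 - max 0 (-⟪u, c⟫_ℝ)) * h c) :
    (∫ c, qind (x - c) * h c) = α := by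
  have hu1 : ⟪u, u⟫_ℝ = 1 := by
    rw [real_inner_self_eq_norm_sq, hu]; norm_num
  -- membership in K from local flatness
  have hin : ∀ z : EuclideanSpace ℝ (Fin n), ⟪u, z - x⟫_ℝ ≤ 0 → ‖z - x‖ ≤ ε → z ∈ K := by
    intro z h1 h2
    have hz : z ∈ Metric.closedBall x ε ∩ {z | ⟪u, z - x⟫_ℝ ≤ 0} := by
      refine ⟨?_, h1⟩
      rw [Metric.mem_closedBall, dist_eq_norm]; exact h2
    rw [← hflat] at hz
    exact hz.2
  -- the outward normal at x must be u
  have hνx := hν x hx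
  have hνxu : ν x = u := by
    set a : ℝ := ⟪ν x, u⟫_ℝ with ha
    have hcomm : ⟪u, ν x⟫_ℝ = a := (real_inner_comm u (ν x)).symm
    set v : EuclideanSpace ℝ (Fin n) := ν x - a • u with hv
    have huv : ⟪u, v⟫_ℝ = 0 := by
      rw [hv, inner_sub_right, real_inner_smul_right, hu1, hcomm]; ring
    have hνv : ⟪ν x, v⟫_ℝ = 1 - a ^ 2 := by
      rw [hv, inner_sub_right, real_inner_smul_right, real_inner_self_eq_norm_sq, hνx.1]
      ring
    have hvK : ∀ t : ℝ, |t| * ‖v‖ ≤ ε → t * ⟪ν x, v⟫_ℝ ≤ 0 := by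
      intro t ht
      have hz : x + t • v ∈ K := by
        apply hin
        · rw [add_sub_cancel_left, real_inner_smul_right, huv]; simp
        · rw [add_sub_cancel_left, norm_smul, Real.norm_eq_abs]; exact ht
      have h2 := hνx.2 _ hz
      rwa [add_sub_cancel_left, real_inner_smul_right] at h2
    have hvnorm : (0:ℝ) < ‖v‖ + 1 := by positivity
    have htpos : (0:ℝ) < ε / (‖v‖ + 1) := by positivity
    have ht : |ε / (‖v‖ + 1)| * ‖v‖ ≤ ε := by
      rw [abs_of_pos htpos, div_mul_eq_mul_div, div_le_iff₀ hvnorm]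
      nlinarith [norm_nonneg v]
    have h1 := hvK _ ht
    have h2 := hvK (-(ε / (‖v‖ + 1))) (by rwa [abs_neg])
    have hzero : ⟪ν x, v⟫_ℝ = 0 := by nlinarith
    have ha2 : a ^ 2 = 1 := by rw [hνv] at hzero; linarith
    have hanneg : 0 ≤ a := by
      have hz : x - ε • u ∈ K := by
        apply hin
        · rw [sub_sub_cancel_left, inner_neg_right, real_inner_smul_right, hu1]
          nlinarith
        · rw [sub_sub_cancel_left, norm_neg, norm_smul, Real.norm_eq_abs, hu,
            abs_of_pos hε]; simp
      have h3 := hνx.2 _ hz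
      rw [sub_sub_cancel_left, inner_neg_right, real_inner_smul_right] at h3
      nlinarith
    have ha1 : a = 1 := by nlinarith
    have hn0 : ‖ν x - u‖ ^ 2 = 0 := by
      rw [← real_inner_self_eq_norm_sq, real_inner_sub_sub_self,
        real_inner_self_eq_norm_sq, real_inner_self_eq_norm_sq, hνx.1, hu, ← ha, ha1]
      ring
    have : ‖ν x - u‖ = 0 := by nlinarith [norm_nonneg (ν x - u)]
    exact sub_eq_zero.mp (norm_eq_zero.mp this)
  -- pointwise identity of the integrands
  have key : ∀ c, qind (x - c) * h c = (1 - max 0 (-⟪u, c⟫_ℝ)) * h c := by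
    intro c
    rcases eq_or_ne (h c) 0 with hc0 | hc0
    · rw [hc0, mul_zero, mul_zero]
    have hcball : ‖c‖ < ε := by
      have := hhsupp (Function.mem_support.mpr hc0)
      simpa [Metric.mem_ball, dist_eq_norm] using this
    have hpx : x - c - x = -c := sub_sub_cancel_left x c
    have hpinner : ⟪u, (x - c) - x⟫_ℝ = -⟪u, c⟫_ℝ := by
      rw [hpx, inner_neg_right]
    rcases le_or_gt 0 (⟪u, c⟫_ℝ) with hs | hs
    · -- x - c ∈ K, both sides equal h c
      have hmem : x - c ∈ K := by
        apply hin
        · rw [hpinner]; linarith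
        · rw [hpx, norm_neg]; exact le_of_lt hcball
      rw [hqind, if_pos hmem, max_eq_left (by linarith)]
      ring
    · -- x - c ∉ K
      obtain ⟨s, hsdef⟩ : ∃ s : ℝ, s = ⟪u, c⟫_ℝ := ⟨_, rfl⟩
      rw [← hsdef] at hs hpinner ⊢
      have hnmem : x - c ∉ K := by
        intro hmem
        have := hsupp hmem
        rw [Set.mem_setOf_eq, hpinner] at this
        linarith
      rw [hqind, if_neg hnmem]
      -- the nearby point q ∈ K used for the lower bound
      obtain ⟨q, hq⟩ : ∃ q : EuclideanSpace ℝ (Fin n), q = (x - c) + s • u := ⟨_, rfl⟩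
      have hqx : q - x = -c + s • u := by rw [hq]; abel
      have hcu : ⟪c, u⟫_ℝ = s := by rw [hsdef]; exact real_inner_comm u c
      have hqK : q ∈ K := by
        apply hin
        · rw [hqx, inner_add_right, inner_neg_right, real_inner_smul_right, hu1]
          rw [hsdef]; ring_nf; linarith [le_refl (0:ℝ)]
        · have hq2 : ‖q - x‖ ^ 2 = ‖c‖ ^ 2 - s ^ 2 := by
            rw [hqx, norm_add_sq_real, norm_neg, inner_neg_left, real_inner_smul_right,
              hcu, norm_smul, Real.norm_eq_abs, hu, mul_one, sq_abs]
            ring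
          obtain ⟨m, hm⟩ : ∃ m : ℝ, m = ‖q - x‖ := ⟨_, rfl⟩
          obtain ⟨cn, hcn⟩ : ∃ cn : ℝ, cn = ‖c‖ := ⟨_, rfl⟩
          rw [← hm] at hq2 ⊢
          rw [← hcn] at hq2
          have hm0 : 0 ≤ m := hm ▸ norm_nonneg _
          have hcε : cn < ε := hcn ▸ hcball
          have hcn0 : 0 ≤ cn := hcn ▸ norm_nonneg _
          nlinarith [sq_nonneg s]
      have hpq : (x - c) - q = (-s) • u := by
        rw [hq, neg_smul]; abel
      have hlb : ∀ r ∈ {r : ℝ | ∃ y ∈ frontier K, r = 1 - ⟪ν y, (x - c) - y⟫_ℝ},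
          1 + s ≤ r := by
        rintro r ⟨y, hy, rfl⟩
        have hνy := hν y hy
        have h1 : ⟪ν y, (x - c) - y⟫_ℝ = ⟪ν y, (x - c) - q⟫_ℝ + ⟪ν y, q - y⟫_ℝ := by
          rw [← inner_add_right]; congr 1; abel
        have h2 : ⟪ν y, q - y⟫_ℝ ≤ 0 := hνy.2 _ hqK
        have h3 : ⟪ν y, (x - c) - q⟫_ℝ ≤ -s := by
          calc ⟪ν y, (x - c) - q⟫_ℝ ≤ ‖ν y‖ * ‖(x - c) - q‖ := real_inner_le_norm _ _
            _ = -s := by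
              rw [hνy.1, hpq, norm_smul, Real.norm_eq_abs, hu, abs_of_pos (by linarith)]
              ring
        linarith
      have hmemS : (1 + s) ∈ {r : ℝ | ∃ y ∈ frontier K, r = 1 - ⟪ν y, (x - c) - y⟫_ℝ} := by
        refine ⟨x, hx, ?_⟩
        rw [hνxu, hpinner]; ring
      have hsInf : sInf {r : ℝ | ∃ y ∈ frontier K, r = 1 - ⟪ν y, (x - c) - y⟫_ℝ} = 1 + s :=
        le_antisymm (csInf_le ⟨1 + s, hlb⟩ hmemS) (le_csInf ⟨1 + s, hmemS⟩ hlb)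
      rw [hsInf, max_eq_right (by linarith : (0:ℝ) ≤ -s)]
      ring_nf
  rw [hα]
  simp only [key]
end

section
/- Let x be a boundary point of K ⊕ εB where K ⊆ ℝ^n is closed convex and ε > 0. Then there exists y ∈ Bd(K) with ‖x − y‖ = ε, the ball B(y, ε) is contained in K ⊕ εB, and the unique unit outer normal to K ⊕ εB at x is (x − y)/ε. -/
open scoped InnerProductSpace

/-- Geometric core of the smoothness of outer parallel bodies: every boundary
point `x` of `K ⊕ εB` lies at distance `ε` from some boundary point `y` of
`K`, the ball `B(y,ε)` is contained in `K ⊕ εB`, and the unique unit outer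
normal to `K ⊕ εB` at `x` is `(x − y)/ε`. -/
theorem outer_parallel_body_normal_formula (n : ℕ)
    (K : Set (EuclideanSpace ℝ (Fin n)))
    (hK : IsClosed K) (hKconv : Convex ℝ K) (hKne : K.Nonempty)
    (ε : ℝ) (hε : 0 < ε)
    (Kε : Set (EuclideanSpace ℝ (Fin n)))
    (hKε : Kε = {z : EuclideanSpace ℝ (Fin n) | ∃ y ∈ K, ‖z - y‖ ≤ ε})
    (x : EuclideanSpace ℝ (Fin n)) (hx : x ∈ frontier Kε) :
    ∃ y ∈ frontier K, ‖x - y‖ = ε ∧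
      Metric.closedBall y ε ⊆ Kε ∧
      ∀ u : EuclideanSpace ℝ (Fin n),
        (‖u‖ = 1 ∧ ∀ z ∈ Kε, ⟪u, z - x⟫_ℝ ≤ 0) ↔ u = ε⁻¹ • (x - y) := by
  -- Kε as a sublevel set of infDist, hence closed
  have hKε' : Kε = {z : EuclideanSpace ℝ (Fin n) | Metric.infDist z K ≤ ε} := by
    rw [hKε]; ext z; constructor
    · rintro ⟨y, hy, hzy⟩
      exact le_trans (Metric.infDist_le_dist_of_mem hy) (by rwa [dist_eq_norm])
    · intro hz
      obtain ⟨y, hy, hdy⟩ := hK.exists_infDist_eq_dist hKne z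
      exact ⟨y, hy, by rw [← dist_eq_norm, ← hdy]; exact hz⟩
  have hKεclosed : IsClosed Kε := by
    rw [hKε']
    exact isClosed_le (Metric.continuous_infDist_pt K) continuous_const
  have hxKε : x ∈ Kε := by
    have := frontier_subset_closure hx
    rwa [hKεclosed.closure_eq] at this
  have hxni : x ∉ interior Kε := hx.2
  -- nearest point y in K
  obtain ⟨y, hyK, hymin⟩ :=
    exists_norm_eq_iInf_of_complete_convex hKne (hK.isComplete) hKconv x
  have hinner : ∀ w ∈ K, ⟪x - y, w - y⟫_ℝ ≤ 0 :=
    (norm_eq_iInf_iff_real_inner_le_zero hKconv hyK).mp hymin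
  -- ‖x - y‖ ≤ ε
  have hle : ‖x - y‖ ≤ ε := by
    rw [hKε] at hxKε
    obtain ⟨w, hwK, hw⟩ := hxKε
    calc ‖x - y‖ = ⨅ w : K, ‖x - w‖ := hymin
      _ ≤ ‖x - (⟨w, hwK⟩ : K)‖ :=
          ciInf_le ⟨0, fun a ⟨i, hi⟩ => hi ▸ norm_nonneg _⟩ _
      _ ≤ ε := hw
  -- ‖x - y‖ = ε
  have hxy : ‖x - y‖ = ε := by
    by_contra hne
    have hlt : ‖x - y‖ < ε := lt_of_le_of_ne hle hne
    apply hxni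
    have : Metric.ball x (ε - ‖x - y‖) ⊆ Kε := by
      intro z hz
      rw [Metric.mem_ball, dist_eq_norm] at hz
      rw [hKε]
      refine ⟨y, hyK, ?_⟩
      calc ‖z - y‖ ≤ ‖z - x‖ + ‖x - y‖ := norm_sub_le_norm_sub_add_norm_sub z x y
        _ ≤ ε := by linarith
    exact interior_maximal this Metric.isOpen_ball (Metric.mem_ball_self (by linarith))
  -- y is a frontier point of K
  have hyfr : y ∈ frontier K := by
    constructor
    · exact subset_closure hyK
    · intro hyint
      obtain ⟨r, hr, hball⟩ := Metric.isOpen_iff.mp isOpen_interior y hyint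
      set t := min (r / 2) (ε / 2) with ht
      have ht0 : 0 < t := lt_min (by linarith) (by linarith)
      have htr : t < r := lt_of_le_of_lt (min_le_left _ _) (by linarith)
      have htε : t < ε := lt_of_le_of_lt (min_le_right _ _) (by linarith)
      set y' := y + (t / ε) • (x - y) with hy'
      have hy'K : y' ∈ K := by
        have : y' ∈ Metric.ball y r := by
          rw [Metric.mem_ball, dist_eq_norm, hy']
          simp only [add_sub_cancel_left]
          rw [norm_smul, Real.norm_eq_abs, abs_of_pos (div_pos ht0 hε), hxy]
          rw [div_mul_cancel₀ _ (ne_of_gt hε)]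
          exact htr
        exact interior_subset (hball this)
      have hxy' : ‖x - y'‖ = ε - t := by
        have : x - y' = (1 - t / ε) • (x - y) := by
          rw [hy']; module
        rw [this, norm_smul, Real.norm_eq_abs, hxy,
          abs_of_pos (by rw [sub_pos]; exact (div_lt_one hε).mpr htε)]
        field_simp
      have : ε ≤ ‖x - y'‖ := by
        rw [← hxy, hymin]
        exact ciInf_le ⟨0, fun a ⟨i, hi⟩ => hi ▸ norm_nonneg _⟩ (⟨y', hy'K⟩ : K)
      rw [hxy'] at this; linarith
  refine ⟨y, hyfr, hxy, ?_, ?_⟩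
  · intro z hz
    rw [Metric.mem_closedBall, dist_eq_norm] at hz
    rw [hKε]; exact ⟨y, hyK, hz⟩
  · intro u
    constructor
    · rintro ⟨hu1, hsup⟩
      -- z₀ := y + ε • u ∈ Kε
      have hz0 : y + ε • u ∈ Kε := by
        rw [hKε]
        refine ⟨y, hyK, ?_⟩
        simp only [add_sub_cancel_left]
        rw [norm_smul, Real.norm_eq_abs, abs_of_pos hε, hu1, mul_one]
      have h1 := hsup _ hz0
      have h2 : ⟪u, y + ε • u - x⟫_ℝ = ε - ⟪u, x - y⟫_ℝ := by
        have : y + ε • u - x = ε • u - (x - y) := by abel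
        rw [this, inner_sub_right, inner_smul_right, real_inner_self_eq_norm_sq, hu1]
        ring
      have h3 : ε ≤ ⟪u, x - y⟫_ℝ := by rw [h2] at h1; linarith
      have h4 : ⟪u, x - y⟫_ℝ ≤ ‖u‖ * ‖x - y‖ := real_inner_le_norm u (x - y)
      have h5 : ⟪u, x - y⟫_ℝ = ‖u‖ * ‖x - y‖ := le_antisymm h4 (by rw [hu1, one_mul, hxy]; exact h3)
      have h6 := inner_eq_norm_mul_iff_real.mp h5
      rw [hu1, one_smul, hxy] at h6
      rw [← h6, smul_smul, inv_mul_cancel₀ (ne_of_gt hε), one_smul]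
    · rintro rfl
      have hu1 : ‖ε⁻¹ • (x - y)‖ = 1 := by
        rw [norm_smul, Real.norm_eq_abs, abs_of_pos (inv_pos.mpr hε), hxy,
          inv_mul_cancel₀ (ne_of_gt hε)]
      refine ⟨hu1, ?_⟩
      intro z hz
      rw [hKε] at hz
      obtain ⟨w, hwK, hw⟩ := hz
      rw [real_inner_smul_left]
      have hdecomp : z - x = (z - w) + (w - y) + (y - x) := by abel
      have hA : ⟪x - y, z - w⟫_ℝ ≤ ε * ε := by
        calc ⟪x - y, z - w⟫_ℝ ≤ ‖x - y‖ * ‖z - w‖ := real_inner_le_norm _ _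
          _ ≤ ε * ε := by rw [hxy]; exact mul_le_mul_of_nonneg_left hw (le_of_lt hε)
      have hB : ⟪x - y, w - y⟫_ℝ ≤ 0 := hinner w hwK
      have hC : ⟪x - y, y - x⟫_ℝ = -(ε * ε) := by
        have : y - x = -(x - y) := by abel
        rw [this, inner_neg_right, real_inner_self_eq_norm_sq, hxy]; ring
      have : ⟪x - y, z - x⟫_ℝ ≤ 0 := by
        rw [hdecomp, inner_add_right, inner_add_right, hC]
        linarith
      have hεinv : 0 ≤ ε⁻¹ := le_of_lt (inv_pos.mpr hε)
      exact mul_nonpos_of_nonneg_of_nonpos hεinv this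
end
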